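/- arXiv:1906.00439 — 9 statements merged into one kernel-verified Lean document; each statement's English description precedes it below -/
import Mathlib

section
/- In a truncated archimedean vector lattice G, for every g ≥ 0 and natural number n, (g ∧ n) + (g ⊖ n)̄ = g ∧ (n+1). -/
/-- A truncation on a (lattice-ordered real) vector lattice `G`: a unary operation
`trunc` on the positive cone satisfying the axioms (T1)–(T3). -/
structure Truncation (G : Type*) [AddCommGroup G] [Lattice G] [Module ℝ G] where
  trunc : G → G
  /-- (T1): `g ⊓ h̄ ≤ ḡ ≤ g` for `g, h ≥ 0`. -/
  inf_trunc_le : ∀ g h : G, 0 ≤ g → 0 ≤ h → g ⊓ trunc h ≤ trunc g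
  trunc_le_self : ∀ g : G, 0 ≤ g → trunc g ≤ g
  /-- (T2): if `ḡ = 0` then `g = 0`. -/
  eq_zero_of_trunc_eq_zero : ∀ g : G, 0 ≤ g → trunc g = 0 → g = 0
  /-- (T3): if `n g = (n g)‾` for all `n` then `g = 0`. -/
  eq_zero_of_forall_trunc_eq : ∀ g : G, 0 ≤ g →
    (∀ n : ℕ, (n : ℝ) • g = trunc ((n : ℝ) • g)) → g = 0

namespace Truncation

variable {G : Type*} [AddCommGroup G] [Lattice G] [Module ℝ G]

/-- `g ∧ r := r • (g/r)‾` for real `r > 0` (and `g ∧ 0 := 0`). -/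
noncomputable def wedge (T : Truncation G) (g : G) (r : ℝ) : G :=
  r • T.trunc (r⁻¹ • g)

/-- `g ⊖ r := r • ((g/r) - (g/r)‾)` for real `r > 0`, and `g ⊖ 0 := g`. -/
noncomputable def ominus (T : Truncation G) (g : G) (r : ℝ) : G :=
  if r = 0 then g else r • (r⁻¹ • g - T.trunc (r⁻¹ • g))

end Truncation

section Aux

variable {G : Type*} [AddCommGroup G] [Lattice G] [Module ℝ G]
    [CovariantClass G G (· + ·) (· ≤ ·)]

private lemma nsmul_mono' {a b : G} (h : a ≤ b) (k : ℕ) : k • a ≤ k • b := by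
  induction k with
  | zero => simp
  | succ m ih => rw [succ_nsmul, succ_nsmul]; exact add_le_add ih h

private lemma nsmul_nonneg' {a : G} (h : 0 ≤ a) (k : ℕ) : 0 ≤ k • a := by
  simpa using nsmul_mono' h k

/-- `a ⊓ (b + c) ≤ (a ⊓ b) + (a ⊓ c)` for nonnegative elements. -/
private lemma inf_add_le' {a b c : G} (ha : 0 ≤ a) (hb : 0 ≤ b) (hc : 0 ≤ c) :
    a ⊓ (b + c) ≤ (a ⊓ b) + (a ⊓ c) := by
  have h1 : (a ⊓ b) + (a ⊓ c) = (a + (a ⊓ c)) ⊓ (b + (a ⊓ c)) := by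
    rw [inf_add]
  have h2 : a + (a ⊓ c) = (a + a) ⊓ (a + c) := by rw [add_inf]
  have h3 : b + (a ⊓ c) = (b + a) ⊓ (b + c) := by rw [add_inf]
  rw [h1, h2, h3]
  refine le_inf (le_inf ?_ ?_) (le_inf ?_ ?_)
  · exact le_trans inf_le_left (le_add_of_nonneg_left ha)
  · exact le_trans inf_le_left (le_add_of_nonneg_right hc)
  · exact le_trans inf_le_left (le_add_of_nonneg_left hb)
  · exact inf_le_right

/-- disjointness is preserved by natural multiples. -/
private lemma inf_nsmul_eq_zero' {a b : G} (ha : 0 ≤ a) (hb : 0 ≤ b)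
    (hab : a ⊓ b = 0) (k : ℕ) : a ⊓ (k • b) = 0 := by
  induction k with
  | zero => simpa using le_antisymm inf_le_right (le_inf ha le_rfl)
  | succ m ih =>
      refine le_antisymm ?_ (le_inf ha (nsmul_nonneg' hb _))
      calc a ⊓ ((m + 1) • b) = a ⊓ (m • b + b) := by rw [succ_nsmul]
        _ ≤ (a ⊓ (m • b)) + (a ⊓ b) := inf_add_le' ha (nsmul_nonneg' hb m) hb
        _ = 0 := by rw [ih, hab, add_zero]

/-- a lattice-ordered group is semiclosed: `k • z ≤ 0 → z ≤ 0`. -/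
private lemma le_zero_of_nsmul_le_zero {z : G} {k : ℕ} (hk : k ≠ 0)
    (h : k • z ≤ 0) : z ≤ 0 := by
  obtain ⟨m, rfl⟩ : ∃ m, k = m + 1 :=
    ⟨k - 1, (Nat.succ_pred_eq_of_pos (Nat.pos_of_ne_zero hk)).symm⟩
  have hz : z ≤ m • (-z) := by
    have h' : z + m • z ≤ 0 := by rwa [succ_nsmul, add_comm] at h
    have h'' : z ≤ -(m • z) := sub_nonpos.1 (by rw [sub_neg_eq_add]; exact h')
    rwa [← neg_nsmul] at h''
  have hzz : z⁺ ≤ m • z⁻ := by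
    rw [posPart_def, negPart_def]
    refine sup_le ?_ (nsmul_nonneg' le_sup_right m)
    exact le_trans hz (nsmul_mono' le_sup_left m)
  have hd : z⁺ ⊓ (m • z⁻) = 0 :=
    inf_nsmul_eq_zero' (posPart_nonneg z) (negPart_nonneg z)
      (posPart_inf_negPart_eq_zero z) m
  have hzp : z⁺ = 0 := le_antisymm (by rw [← hd]; exact le_inf le_rfl hzz) (posPart_nonneg z)
  calc z ≤ z⁺ := le_posPart z
    _ = 0 := hzp

private lemma smul_le_smul_iff_nat {k : ℕ} (hk : k ≠ 0) {a b : G} :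
    (k : ℝ) • a ≤ (k : ℝ) • b ↔ a ≤ b := by
  constructor
  · intro h
    have hz : (k : ℝ) • (a - b) ≤ 0 := by
      rw [smul_sub]; exact sub_nonpos.2 h
    rw [Nat.cast_smul_eq_nsmul] at hz
    exact sub_nonpos.1 (le_zero_of_nsmul_le_zero hk hz)
  · intro h
    rw [Nat.cast_smul_eq_nsmul, Nat.cast_smul_eq_nsmul]
    exact nsmul_mono' h k

/-- The core computation, for an abstract nonnegative truncation satisfying (T1). -/
private lemma core_identity (t : G → G)
    (h1 : ∀ a b : G, 0 ≤ a → 0 ≤ b → a ⊓ t b ≤ t a)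
    (h2 : ∀ a : G, 0 ≤ a → t a ≤ a)
    (h0 : ∀ a : G, 0 ≤ a → 0 ≤ t a)
    (g : G) (hg : 0 ≤ g) (n : ℕ) (hn : n ≠ 0) :
    ((n : ℝ) + 1) • t ((((n : ℝ) + 1))⁻¹ • g)
      = (n : ℝ) • t ((n : ℝ)⁻¹ • g) + t (g - (n : ℝ) • t ((n : ℝ)⁻¹ • g)) := by
  have hmono : ∀ a b : G, 0 ≤ a → a ≤ b → t a ≤ t b := by
    intro a b ha hab
    have hb : 0 ≤ b := le_trans ha hab
    have h := h1 b a hb ha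
    rwa [inf_eq_right.2 (le_trans (h2 a ha) hab)] at h
  have hL3 : ∀ a b : G, 0 ≤ a → 0 ≤ b → a ≤ t b → t a = a := by
    intro a b ha hb hab
    refine le_antisymm (h2 a ha) ?_
    have h := h1 a b ha hb
    rwa [inf_eq_left.2 hab] at h
  have hNne : ((n : ℝ)) ≠ 0 := Nat.cast_ne_zero.2 hn
  have hMcast : ((n : ℝ) + 1) = ((n + 1 : ℕ) : ℝ) := by push_cast; ring
  have hMne : ((n : ℝ) + 1) ≠ 0 := by rw [hMcast]; exact Nat.cast_ne_zero.2 (Nat.succ_ne_zero n)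
  have hMle : ∀ a b : G, ((n : ℝ) + 1) • a ≤ ((n : ℝ) + 1) • b ↔ a ≤ b := by
    intro a b; rw [hMcast]; exact smul_le_smul_iff_nat (Nat.succ_ne_zero n)
  have hNle : ∀ a b : G, (n : ℝ) • a ≤ (n : ℝ) • b ↔ a ≤ b := fun a b =>
    smul_le_smul_iff_nat hn
  set u : G := (n : ℝ)⁻¹ • g with hu
  set v : G := ((n : ℝ) + 1)⁻¹ • g with hv
  have hNu : (n : ℝ) • u = g := smul_inv_smul₀ hNne g
  have hMv : ((n : ℝ) + 1) • v = g := smul_inv_smul₀ hMne g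
  have hu0 : 0 ≤ u := by
    rw [← hNle 0 u, smul_zero, hNu]; exact hg
  have hv0 : 0 ≤ v := by
    rw [← hMle 0 v, smul_zero, hMv]; exact hg
  have hvu : v ≤ u := by
    have e1 : ((n : ℝ) * ((n : ℝ) + 1)) • u = ((n : ℝ) + 1) • ((n : ℝ) • u) := by
      rw [mul_comm, mul_smul]
    have e2 : ((n : ℝ) * ((n : ℝ) + 1)) • v = (n : ℝ) • (((n : ℝ) + 1) • v) :=
      mul_smul _ _ _
    have key : ((n * (n + 1) : ℕ) : ℝ) • (u - v) = g := by
      push_cast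
      rw [smul_sub, e1, e2, hNu, hMv, ← sub_smul]
      simp
    have hk : (n * (n + 1) : ℕ) ≠ 0 := Nat.mul_ne_zero hn (Nat.succ_ne_zero n)
    have h := (smul_le_smul_iff_nat (G := G) hk (a := 0) (b := u - v)).1
      (by rw [smul_zero, key]; exact hg)
    exact sub_nonneg.1 h
  -- basic facts about `A := t u`, `B := t v`, `d`, `c := t d`
  set A : G := t u with hA
  set B : G := t v with hB
  have hA0 : 0 ≤ A := h0 u hu0
  have hB0 : 0 ≤ B := h0 v hv0
  have hAu : A ≤ u := h2 u hu0
  have hBv : B ≤ v := h2 v hv0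
  have hBA : B ≤ A := hmono v u hv0 hvu
  have hNAg : (n : ℝ) • A ≤ g := by
    rw [← hNu]; exact (hNle A u).2 hAu
  have hMBg : ((n : ℝ) + 1) • B ≤ g := by
    rw [← hMv]; exact (hMle B v).2 hBv
  set d : G := g - (n : ℝ) • A with hd
  have hd0 : 0 ≤ d := sub_nonneg.2 hNAg
  set c : G := t d with hc
  have hc0 : 0 ≤ c := h0 d hd0
  have hcd : c ≤ d := h2 d hd0
  -- Direction 1 : `n • A + c ≤ (n+1) • B`
  have dir1 : (n : ℝ) • A + c ≤ ((n : ℝ) + 1) • B := by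
    have hh0 : 0 ≤ (n : ℝ) • A + c := by
      refine add_nonneg ?_ hc0
      rw [← smul_zero (n : ℝ)]; exact (hNle 0 A).2 hA0
    have hhg : (n : ℝ) • A + c ≤ g := by
      have := add_le_add_right hcd ((n : ℝ) • A)
      rwa [hd, add_sub_cancel] at this
    have hsup : A ⊔ c ≤ t (u ⊔ d) :=
      sup_le (hmono u (u ⊔ d) hu0 le_sup_left) (hmono d (u ⊔ d) hd0 le_sup_right)
    have hhM : (n : ℝ) • A + c ≤ ((n : ℝ) + 1) • (t (u ⊔ d)) := by
      have step : (n : ℝ) • A + c ≤ ((n : ℝ) + 1) • (A ⊔ c) := by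
        rw [add_smul, one_smul]
        exact add_le_add ((hNle A (A ⊔ c)).2 le_sup_left) le_sup_right
      refine le_trans step ?_
      exact (hMle (A ⊔ c) (t (u ⊔ d))).2 hsup
    set h' : G := ((n : ℝ) + 1)⁻¹ • ((n : ℝ) • A + c) with hh'
    have hMh' : ((n : ℝ) + 1) • h' = (n : ℝ) • A + c := smul_inv_smul₀ hMne _
    have h'0 : 0 ≤ h' := by
      rw [← hMle 0 h', smul_zero, hMh']; exact hh0
    have h'le : h' ≤ t (u ⊔ d) := by
      rw [← hMle h' (t (u ⊔ d)), hMh']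
      refine le_trans hhM ?_
      exact le_rfl
    have hud0 : 0 ≤ u ⊔ d := le_trans hu0 le_sup_left
    have th' : t h' = h' := hL3 h' (u ⊔ d) h'0 hud0 h'le
    have h'v : h' ≤ v := by
      rw [← hMle h' v, hMh', hMv]; exact hhg
    have : h' ≤ B := by
      rw [← th']; exact hmono h' v h'0 h'v
    rw [← hMh']
    exact (hMle h' B).2 this
  -- Direction 2 : `(n+1) • B ≤ n • A + c`
  have dir2 : ((n : ℝ) + 1) • B ≤ (n : ℝ) • A + c := by
    have hz0 : (n : ℝ) • A ≤ ((n : ℝ) + 1) • B := by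
      set y : G := ((n : ℝ) + 1)⁻¹ • ((n : ℝ) • A) with hy
      have hMy : ((n : ℝ) + 1) • y = (n : ℝ) • A := smul_inv_smul₀ hMne _
      have hyv : y ≤ v := by
        rw [← hMle y v, hMy, hMv]; exact hNAg
      have hyA : y ≤ A := by
        rw [← hMle y A, hMy, add_smul, one_smul]
        exact le_add_of_nonneg_right hA0
      have hyB : y ≤ B := le_trans (le_inf hyv hyA) (h1 v u hv0 hu0)
      rw [← hMy]; exact (hMle y B).2 hyB
    set z : G := ((n : ℝ) + 1) • B - (n : ℝ) • A with hz
    have hz0' : 0 ≤ z := sub_nonneg.2 hz0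
    have hzA : z ≤ A := by
      rw [hz, sub_le_iff_le_add]
      calc ((n : ℝ) + 1) • B ≤ ((n : ℝ) + 1) • A := (hMle B A).2 hBA
        _ = (n : ℝ) • A + A := by rw [add_smul, one_smul]
        _ = A + (n : ℝ) • A := by rw [add_comm]
    have hzd : z ≤ d := by
      rw [hz, hd]
      exact sub_le_sub_right hMBg _
    have tz : t z = z := hL3 z u hz0' hu0 hzA
    have hzc : z ≤ c := by
      rw [← tz]; exact hmono z d hz0' hzd
    have : ((n : ℝ) + 1) • B = (n : ℝ) • A + z := by rw [hz]; abel
    rw [this]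
    exact add_le_add_right hzc _
  exact le_antisymm dir2 dir1

end Aux

/-- In a truncated archimedean vector lattice, `(g ∧ n) + (g ⊖ n)‾ = g ∧ (n + 1)`
for every `g ≥ 0` and every natural number `n`. -/
theorem stmt5 {G : Type*} [AddCommGroup G] [Lattice G] [Module ℝ G]
    [CovariantClass G G (· + ·) (· ≤ ·)]
    (arch : ∀ g h : G, 0 ≤ g → (∀ n : ℕ, n • g ≤ h) → g = 0)
    (T : Truncation G) (g : G) (hg : 0 ≤ g) (n : ℕ) :
    T.wedge g n + T.trunc (T.ominus g n) = T.wedge g (n + 1) := by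
  by_cases hn : n = 0
  · subst hn
    simp [Truncation.wedge, Truncation.ominus]
  · -- notation
    have hNne : ((n : ℝ)) ≠ 0 := Nat.cast_ne_zero.2 hn
    set e : G := T.trunc 0 with he
    have he0 : e ≤ 0 := T.trunc_le_self 0 le_rfl
    have hee : (0 : G) ≤ -e := neg_nonneg.2 he0
    have hte : ∀ x : G, 0 ≤ x → e ≤ T.trunc x := by
      intro x hx
      have h := T.inf_trunc_le x 0 hx le_rfl
      rwa [← he, inf_eq_right.2 (le_trans he0 hx)] at h
    have hinf : ∀ x : G, 0 ≤ x → T.trunc x ⊓ 0 = e := by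
      intro x hx
      refine le_antisymm ?_ (le_inf (hte x hx) he0)
      have h := T.inf_trunc_le 0 x le_rfl hx
      rwa [inf_comm, ← he] at h
    have tmono : ∀ a b : G, 0 ≤ a → a ≤ b → T.trunc a ≤ T.trunc b := by
      intro a b ha hab
      have h := T.inf_trunc_le b a (le_trans ha hab) ha
      rwa [inf_eq_right.2 (le_trans (T.trunc_le_self a ha) hab)] at h
    have s0 : ∀ x : G, 0 ≤ x → (0 : G) ≤ T.trunc x - e := fun x hx =>
      sub_nonneg.2 (hte x hx)
    have sdisj : ∀ x : G, 0 ≤ x → (T.trunc x - e) ⊓ (-e) = 0 := by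
      intro x hx
      have h := inf_sub (T.trunc x) (0 : G) e
      rw [hinf x hx, zero_sub, sub_self] at h
      exact h.symm
    have h2' : ∀ a : G, 0 ≤ a → T.trunc a - e ≤ a := by
      intro a ha
      have hle : T.trunc a - e ≤ a + -e := by
        rw [sub_eq_add_neg]
        exact add_le_add_left (T.trunc_le_self a ha) _
      calc T.trunc a - e = (T.trunc a - e) ⊓ (a + -e) := (inf_eq_left.2 hle).symm
        _ ≤ ((T.trunc a - e) ⊓ a) + ((T.trunc a - e) ⊓ (-e)) :=
            inf_add_le' (s0 a ha) ha hee
        _ = (T.trunc a - e) ⊓ a := by rw [sdisj a ha, add_zero]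
        _ ≤ a := inf_le_right
    have h1' : ∀ a b : G, 0 ≤ a → 0 ≤ b → a ⊓ (T.trunc b - e) ≤ T.trunc a - e := by
      intro a b ha hb
      rw [le_sub_iff_add_le]
      calc (a ⊓ (T.trunc b - e)) + e = (a + e) ⊓ (T.trunc b - e + e) := inf_add _ _ _
        _ = (a + e) ⊓ T.trunc b := by rw [sub_add_cancel]
        _ ≤ a ⊓ T.trunc b := inf_le_inf_right _ (add_le_of_nonpos_right he0)
        _ ≤ T.trunc a := T.inf_trunc_le a b ha hb
    have h0' : ∀ a : G, 0 ≤ a → (0 : G) ≤ T.trunc a - e := s0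
    -- shift invariance of `x ↦ T.trunc x - e` by multiples of `-e`
    have sshift : ∀ x : G, 0 ≤ x → ∀ k : ℕ,
        T.trunc (x + k • (-e)) - e = T.trunc x - e := by
      intro x hx k
      have hx' : 0 ≤ x + k • (-e) := add_nonneg hx (nsmul_nonneg' hee k)
      have hdzj : (T.trunc (x + k • (-e)) - e) ⊓ (k • (-e)) = 0 :=
        inf_nsmul_eq_zero' (s0 _ hx') hee (sdisj _ hx') k
      have hlex : T.trunc (x + k • (-e)) - e ≤ x := by
        calc T.trunc (x + k • (-e)) - e
            = (T.trunc (x + k • (-e)) - e) ⊓ (x + k • (-e)) :=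
              (inf_eq_left.2 (h2' _ hx')).symm
          _ ≤ ((T.trunc (x + k • (-e)) - e) ⊓ x)
              + ((T.trunc (x + k • (-e)) - e) ⊓ (k • (-e))) :=
              inf_add_le' (s0 _ hx') hx (nsmul_nonneg' hee k)
          _ = (T.trunc (x + k • (-e)) - e) ⊓ x := by rw [hdzj, add_zero]
          _ ≤ x := inf_le_right
      refine le_antisymm ?_ ?_
      · have h := h1' x (x + k • (-e)) hx hx'
        rwa [inf_eq_right.2 hlex] at h
      · have := tmono x (x + k • (-e)) hx (le_add_of_nonneg_right (nsmul_nonneg' hee k))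
        exact sub_le_sub_right this e
    -- the core identity for `x ↦ T.trunc x - e`
    have key := core_identity (fun x => T.trunc x - e) h1' h2' h0' g hg n hn
    -- unfold the goal
    set u : G := (n : ℝ)⁻¹ • g with hu
    have hNu : (n : ℝ) • u = g := smul_inv_smul₀ hNne g
    have hu0 : 0 ≤ u := by
      have h := (smul_le_smul_iff_nat (G := G) hn (a := 0) (b := u)).1
      exact h (by rw [smul_zero, hNu]; exact hg)
    have hsuu : T.trunc u - e ≤ u := h2' u hu0
    have hNsu : (n : ℝ) • (T.trunc u - e) ≤ g := by
      rw [← hNu]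
      exact (smul_le_smul_iff_nat (G := G) hn).2 hsuu
    have hdd0 : (0 : G) ≤ g - (n : ℝ) • (T.trunc u - e) := sub_nonneg.2 hNsu
    have homi : T.ominus g n = (g - (n : ℝ) • (T.trunc u - e)) + n • (-e) := by
      rw [Truncation.ominus, if_neg hNne, smul_sub, hNu, ← hu]
      have : T.trunc u = (T.trunc u - e) + e := by abel
      rw [this, smul_add, ← Nat.cast_smul_eq_nsmul ℝ n (-e), smul_neg]
      abel
    have htomi : T.trunc (T.ominus g n)
        = (T.trunc (g - (n : ℝ) • (T.trunc u - e)) - e) + e := by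
      rw [homi]
      have h := sshift (g - (n : ℝ) • (T.trunc u - e)) hdd0 n
      rw [show T.trunc ((g - (n : ℝ) • (T.trunc u - e)) + n • (-e))
          = (T.trunc ((g - (n : ℝ) • (T.trunc u - e)) + n • (-e)) - e) + e by abel, h]
    have hwn : T.wedge g n = (n : ℝ) • (T.trunc u - e) + (n : ℝ) • e := by
      rw [Truncation.wedge, ← hu, ← smul_add]
      congr 1
      abel
    have hwm : T.wedge g (n + 1)
        = ((n : ℝ) + 1) • (T.trunc (((n : ℝ) + 1)⁻¹ • g) - e) + ((n : ℝ) + 1) • e := by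
      rw [Truncation.wedge, ← smul_add]
      congr 1
      abel
    rw [hwn, htomi, hwm, key, add_smul, one_smul]
    abel
end

section
/- In a truncated archimedean vector lattice G, for every g ≥ 0 and natural number m, g ∧ m = Σ_{n=1}^{m} ((g ⊖ (n−1))̄), where g ⊖ 0 := g. -/
section Aux

variable {G : Type*} [AddCommGroup G] [Lattice G] [Module ℝ G]
    [CovariantClass G G (· + ·) (· ≤ ·)]

private lemma aux_inf_add_zero {a b c : G} (ha : 0 ≤ a) (hb : 0 ≤ b) (hc : 0 ≤ c)
    (hab : a ⊓ b = 0) (hac : a ⊓ c = 0) : a ⊓ (b + c) = 0 := by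
  have h1 : a ⊓ (b + c) ≤ (a + c) ⊓ (b + c) := by
    gcongr
    calc a = a + 0 := by rw [add_zero]
    _ ≤ a + c := by gcongr
  have h2 : (a + c) ⊓ (b + c) ≤ (a ⊓ b) + c := by
    have := le_inf (show (a + c) ⊓ (b + c) - c ≤ a from sub_le_iff_le_add.mpr inf_le_left)
      (show (a + c) ⊓ (b + c) - c ≤ b from sub_le_iff_le_add.mpr inf_le_right)
    exact sub_le_iff_le_add.mp this
  have h3 : a ⊓ (b + c) ≤ a ⊓ c := by
    refine le_inf inf_le_left ?_
    refine (h1.trans h2).trans ?_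
    rw [hab, zero_add]
  have h4 : 0 ≤ a ⊓ (b + c) := le_inf ha (add_nonneg hb hc)
  exact le_antisymm (h3.trans_eq hac) h4

/-- In a lattice-ordered abelian group, `0 ≤ n • v` for `n > 0` implies `0 ≤ v`. -/
private lemma nonneg_of_nsmul_nonneg {v : G} {n : ℕ} (hn : 0 < n) (h : 0 ≤ n • v) :
    0 ≤ v := by
  have hpd : v⁺ ⊓ v⁻ = 0 := posPart_inf_negPart_eq_zero v
  -- v⁻ ⊓ (k • v⁺) = 0 for all k
  have hdk : ∀ k : ℕ, v⁻ ⊓ (k • v⁺) = 0 := by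
    intro k
    induction k with
    | zero => simpa using inf_eq_right.mpr (negPart_nonneg v)
    | succ k ih =>
      rw [succ_nsmul]
      exact aux_inf_add_zero (negPart_nonneg v) (nsmul_nonneg (posPart_nonneg v) k)
        (posPart_nonneg v) ih (by rw [inf_comm]; exact hpd)
  have h1 : n • v⁻ ≤ n • v⁺ := by
    have heq : n • v = n • v⁺ - n • v⁻ := by rw [← smul_sub, posPart_sub_negPart]
    have h2 : 0 ≤ n • v⁺ - n • v⁻ := heq ▸ h
    exact sub_nonneg.mp h2
  have h2 : v⁻ ≤ n • v⁻ := by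
    have : v⁻ + 0 ≤ v⁻ + (n - 1) • v⁻ := by
      gcongr
      exact nsmul_nonneg (negPart_nonneg v) _
    calc v⁻ = v⁻ + 0 := (add_zero _).symm
    _ ≤ v⁻ + (n - 1) • v⁻ := this
    _ = n • v⁻ := by
      rw [← succ_nsmul']
      congr 1
      omega
  have h3 : v⁻ ≤ n • v⁺ := h2.trans h1
  have h4 : v⁻ = 0 := by
    have := hdk n
    rwa [inf_eq_left.mpr h3] at this
  rw [← posPart_sub_negPart v, h4, sub_zero]
  exact posPart_nonneg v

private lemma natsmul_mono (k : ℕ) {x y : G} (h : x ≤ y) : (k : ℝ) • x ≤ (k : ℝ) • y := by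
  rw [Nat.cast_smul_eq_nsmul, Nat.cast_smul_eq_nsmul]
  exact nsmul_le_nsmul_right h k

private lemma natinv_smul_nonneg {k : ℕ} (hk : 0 < k) {x : G} (hx : 0 ≤ x) :
    0 ≤ ((k : ℝ))⁻¹ • x := by
  refine nonneg_of_nsmul_nonneg hk ?_
  rw [← Nat.cast_smul_eq_nsmul ℝ, smul_smul, mul_inv_cancel₀ (by exact_mod_cast hk.ne')]
  simpa using hx

private lemma natinv_smul_mono {k : ℕ} (hk : 0 < k) {x y : G} (h : x ≤ y) :
    ((k : ℝ))⁻¹ • x ≤ ((k : ℝ))⁻¹ • y := by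
  rw [← sub_nonneg, ← smul_sub]
  exact natinv_smul_nonneg hk (by rwa [sub_nonneg])

end Aux

namespace Truncation

variable {G : Type*} [AddCommGroup G] [Lattice G] [Module ℝ G]
    [CovariantClass G G (· + ·) (· ≤ ·)]

lemma trunc_mono (T : Truncation G) {x y : G} (hx : 0 ≤ x) (hxy : x ≤ y) :
    T.trunc x ≤ T.trunc y := by
  have h1 : T.trunc x ≤ x := T.trunc_le_self x hx
  have h2 := T.inf_trunc_le y x (hx.trans hxy) hx
  rwa [inf_eq_right.mpr (h1.trans hxy)] at h2

/-- The key step: `g ∧ (r+s) = (g ∧ r) + ((g ⊖ r) ∧ s)`. -/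
lemma wedge_add (T : Truncation G) {g : G} (hg : 0 ≤ g) (r s : ℕ) (hr : 0 < r) (hs : 0 < s) :
    ((r + s : ℕ) : ℝ) • T.trunc (((r + s : ℕ) : ℝ)⁻¹ • g)
      = (r : ℝ) • T.trunc ((r : ℝ)⁻¹ • g)
        + (s : ℝ) • T.trunc ((s : ℝ)⁻¹ • (g - (r : ℝ) • T.trunc ((r : ℝ)⁻¹ • g))) := by
  set t : ℕ := r + s with ht
  have htpos : 0 < t := by omega
  have htR : ((t : ℝ)) ≠ 0 := by exact_mod_cast htpos.ne'
  have hrR : ((r : ℝ)) ≠ 0 := by exact_mod_cast hr.ne'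
  have hsR : ((s : ℝ)) ≠ 0 := by exact_mod_cast hs.ne'
  set α : G := T.trunc ((t : ℝ)⁻¹ • g) with hα
  set u : G := T.trunc ((r : ℝ)⁻¹ • g) with hu
  set p : G := (r : ℝ) • u with hp
  set b : G := g - p with hb
  set A : G := (t : ℝ) • α with hA
  -- basic nonnegativity
  have hginvr : 0 ≤ (r : ℝ)⁻¹ • g := natinv_smul_nonneg hr hg
  have hginvt : 0 ≤ (t : ℝ)⁻¹ • g := natinv_smul_nonneg htpos hg
  have hp_le : p ≤ g := by
    have := natsmul_mono (G := G) r (T.trunc_le_self _ hginvr)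
    rwa [smul_inv_smul₀ hrR] at this
  have hbnn : 0 ≤ b := sub_nonneg.mpr hp_le
  have hbinvs : 0 ≤ (s : ℝ)⁻¹ • b := natinv_smul_nonneg hs hbnn
  set v : G := T.trunc ((s : ℝ)⁻¹ • b) with hv
  set q : G := (s : ℝ) • v with hq
  have hq_le : q ≤ b := by
    have := natsmul_mono (G := G) s (T.trunc_le_self _ hbinvs)
    rwa [smul_inv_smul₀ hsR] at this
  have hA_le : A ≤ g := by
    have := natsmul_mono (G := G) t (T.trunc_le_self _ hginvt)
    rwa [smul_inv_smul₀ htR] at this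
  -- (t⁻¹ • g ≤ r⁻¹ • g)
  have hscale : (t : ℝ)⁻¹ • g ≤ (r : ℝ)⁻¹ • g := by
    have h1 : (r : ℝ) • ((t : ℝ)⁻¹ • g) ≤ g := by
      have h2 : ((t : ℝ) - (r : ℝ)) • ((t : ℝ)⁻¹ • g) = (s : ℝ) • ((t : ℝ)⁻¹ • g) := by
        congr 1
        push_cast [ht]
        ring
      have h3 : 0 ≤ (s : ℝ) • ((t : ℝ)⁻¹ • g) := by
        rw [Nat.cast_smul_eq_nsmul]
        exact nsmul_nonneg hginvt s
      have h4 : (r : ℝ) • ((t : ℝ)⁻¹ • g) ≤ (t : ℝ) • ((t : ℝ)⁻¹ • g) := by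
        rw [← sub_nonneg, ← sub_smul, h2]
        exact h3
      rwa [smul_inv_smul₀ htR] at h4
    have := natinv_smul_mono (G := G) hr h1
    rwa [inv_smul_smul₀ hrR] at this
  have hαu : α ≤ u := T.trunc_mono hginvt hscale
  -- upper bound : A ≤ p + q
  have hupper : A ≤ p + q := by
    have h3 : A - p ≤ (s : ℝ) • α := by
      have h' : (r : ℝ) • α ≤ p := natsmul_mono r hαu
      have hsplit : A = (r : ℝ) • α + (s : ℝ) • α := by
        rw [hA, ← add_smul]
        congr 1
        push_cast [ht]
        ring
      rw [hsplit]
      calc (r : ℝ) • α + (s : ℝ) • α - p ≤ (r : ℝ) • α + (s : ℝ) • α - (r : ℝ) • α := by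
            gcongr
      _ = (s : ℝ) • α := by abel
    have h4 : A - p ≤ b := sub_le_sub_right hA_le p
    have h5 : (s : ℝ)⁻¹ • (A - p) ≤ α := by
      have := natinv_smul_mono (G := G) hs h3
      rwa [inv_smul_smul₀ hsR] at this
    have h6 : (s : ℝ)⁻¹ • (A - p) ≤ (s : ℝ)⁻¹ • b := natinv_smul_mono hs h4
    have h7 : ((s : ℝ)⁻¹ • b) ⊓ α ≤ v := T.inf_trunc_le _ _ hbinvs hginvt
    have h8 : (s : ℝ)⁻¹ • (A - p) ≤ v := (le_inf h6 h5).trans h7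
    have h9 : A - p ≤ q := by
      have := natsmul_mono (G := G) s h8
      rwa [smul_inv_smul₀ hsR] at this
    exact sub_le_iff_le_add'.mp h9
  -- lower bound : p + q ≤ A
  have hlower : p + q ≤ A := by
    letI : DistribLattice G := AddCommGroup.toDistribLattice G
    have k1 : ((t : ℝ)⁻¹ • g) ⊓ u ≤ α := T.inf_trunc_le _ _ hginvt hginvr
    have k2 : ((t : ℝ)⁻¹ • g) ⊓ v ≤ α := T.inf_trunc_le _ _ hginvt hbinvs
    have k3 : p + q ≤ g := by
      calc p + q ≤ p + b := by gcongr
      _ = g := by rw [hb]; abel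
    have k4 : p + q ≤ (t : ℝ) • (u ⊔ v) := by
      have l1 : p ≤ (r : ℝ) • (u ⊔ v) := natsmul_mono r le_sup_left
      have l2 : q ≤ (s : ℝ) • (u ⊔ v) := natsmul_mono s le_sup_right
      calc p + q ≤ (r : ℝ) • (u ⊔ v) + (s : ℝ) • (u ⊔ v) := add_le_add l1 l2
      _ = (t : ℝ) • (u ⊔ v) := by
          rw [← add_smul]
          congr 1
          push_cast [ht]
          ring
    have k5a : (t : ℝ)⁻¹ • (p + q) ≤ (t : ℝ)⁻¹ • g := natinv_smul_mono htpos k3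
    have k5b : (t : ℝ)⁻¹ • (p + q) ≤ u ⊔ v := by
      have := natinv_smul_mono (G := G) htpos k4
      rwa [inv_smul_smul₀ htR] at this
    have k6 : (t : ℝ)⁻¹ • (p + q) ≤ α := by
      have : (t : ℝ)⁻¹ • (p + q) ≤ ((t : ℝ)⁻¹ • g) ⊓ (u ⊔ v) := le_inf k5a k5b
      rw [inf_sup_left] at this
      exact this.trans (sup_le k1 k2)
    have := natsmul_mono (G := G) t k6
    rwa [smul_inv_smul₀ htR] at this
  exact le_antisymm hupper hlower

end Truncation

/-- In a truncated archimedean vector lattice,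
`g ∧ m = ∑_{n = 1}^{m} (g ⊖ (n - 1))‾` for every `g ≥ 0` and natural number `m`. -/
theorem stmt6 {G : Type*} [AddCommGroup G] [Lattice G] [Module ℝ G]
    [CovariantClass G G (· + ·) (· ≤ ·)]
    (arch : ∀ g h : G, 0 ≤ g → (∀ n : ℕ, n • g ≤ h) → g = 0)
    (T : Truncation G) (g : G) (hg : 0 ≤ g) (m : ℕ) (hm : 0 < m) :
    T.wedge g m = ∑ n ∈ Finset.range m, T.trunc (T.ominus g n) := by
  induction m with
  | zero => omega
  | succ m ih =>
    rcases Nat.eq_zero_or_pos m with hm0 | hmpos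
    · subst hm0
      simp only [Finset.sum_range_one, Truncation.wedge, Truncation.ominus]
      norm_num
    · rw [Finset.sum_range_succ, ← ih hmpos]
      have hmR : ((m : ℝ)) ≠ 0 := by exact_mod_cast hmpos.ne'
      have key := T.wedge_add hg m 1 hmpos one_pos
      have hom : T.ominus g m = g - (m : ℝ) • T.trunc ((m : ℝ)⁻¹ • g) := by
        rw [Truncation.ominus, if_neg hmR, smul_sub, smul_inv_smul₀ hmR]
      rw [Truncation.wedge, Truncation.wedge, hom]
      push_cast at key ⊢
      simpa using key
end

section
/- Dini's theorem for pointed frames: if L is a compact frame and (g_n) is a sequence of positive elements of R₀L (pointed frame homomorphisms from the pointed frame of reals to L) such that ⋁_n g_n(−∞, ε) = ⊤ for every ε > 0, then for every ε > 0 there exists m such that g_n(−∞, ε) = ⊤ for all n ≥ m. -/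
open TopologicalSpace

/-- The Mathlib (Dec 2024) definition of a compact element of a complete lattice. -/
def CompleteLattice.IsCompactElement {α : Type*} [CompleteLattice α] (k : α) :=
  ∀ s : Set α, k ≤ sSup s → ∃ t : Finset α, ↑t ⊆ s ∧ k ≤ t.sup id

/-- The open lower ray `(-∞, r)` as an open set of `ℝ`. -/
def Oiio (r : ℝ) : Opens ℝ := ⟨Set.Iio r, isOpen_Iio⟩

/-- The open upper ray `(r, ∞)` as an open set of `ℝ`. -/
def Oioi (r : ℝ) : Opens ℝ := ⟨Set.Ioi r, isOpen_Ioi⟩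

/-- The open interval `(r, s)` as an open set of `ℝ`. -/
def Oioo (r s : ℝ) : Opens ℝ := ⟨Set.Ioo r s, isOpen_Ioo⟩

/-- Dini's theorem for (pointed) frames: if `L` is a compact frame and `(gₙ)`
is a nonincreasing sequence of positive elements of `R₀L` (pointed frame
homomorphisms `𝒪⋆ℝ → L`) which converges pointwise (downward) to `0`, i.e.
`⋁ₙ gₙ(-∞, ε) = ⊤` for every `ε > 0`, then it converges uniformly to `0`:
for every `ε > 0` there is `m` with `gₙ(-∞, ε) = ⊤` for all `n ≥ m`. -/
theorem stmt9 (L : Type*) [Order.Frame L]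
    (hcompact : CompleteLattice.IsCompactElement (⊤ : L))
    (pt : FrameHom L Prop)
    (g : ℕ → FrameHom (Opens ℝ) L)
    (hpointed : ∀ n (U : Opens ℝ), pt (g n U) ↔ (0 : ℝ) ∈ (U : Set ℝ))
    (hpos : ∀ n, g n (Oiio 0) = ⊥)
    (hdec : ∀ n (ε : ℝ), g n (Oiio ε) ≤ g (n + 1) (Oiio ε))
    (hconv : ∀ ε : ℝ, 0 < ε → ⨆ n, g n (Oiio ε) = ⊤) :
    ∀ ε : ℝ, 0 < ε → ∃ m : ℕ, ∀ n : ℕ, m ≤ n → g n (Oiio ε) = ⊤ := by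
  intro ε hε
  classical
  have hmono : Monotone fun n => g n (Oiio ε) := by
    apply monotone_nat_of_le_succ
    intro n; exact hdec n ε
  have hle : (⊤ : L) ≤ sSup (Set.range fun n => g n (Oiio ε)) := by
    rw [sSup_range]
    exact (hconv ε hε).ge
  obtain ⟨t, hts, htsup⟩ := hcompact _ hle
  by_cases ht : t.Nonempty
  · -- choose index for each element of t
    have : ∀ x ∈ t, ∃ n, g n (Oiio ε) = x := fun x hx => hts hx
    choose f hf using this
    obtain ⟨m, hm⟩ : ∃ m, ∀ x (hx : x ∈ t), f x hx ≤ m := by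
      refine ⟨t.attach.sup (fun x => f x.1 x.2), fun x hx => ?_⟩
      exact Finset.le_sup (f := fun x : {y // y ∈ t} => f x.1 x.2)
        (Finset.mem_attach t ⟨x, hx⟩)
    refine ⟨m, fun n hn => ?_⟩
    refine top_le_iff.mp (htsup.trans ?_)
    rw [Finset.sup_le_iff]
    intro b hb
    have := hf b hb
    calc (id b : L) = g (f b hb) (Oiio ε) := this.symm
      _ ≤ g n (Oiio ε) := hmono ((hm b hb).trans hn)
  · rw [Finset.not_nonempty_iff_eq_empty] at ht
    subst ht
    simp at htsup
    exact ⟨0, fun n _ => top_le_iff.mp (htsup ▸ bot_le)⟩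
end

section
/- Let q: M → L be a dense surjective pointed frame homomorphism and h': 𝒪*(ℝ ∪ {±∞}) → M a pointed frame homomorphism. Then there exists a pointed frame homomorphism h: 𝒪*ℝ → L with h ∘ p = q ∘ h' (where p: 𝒪*(ℝ∪{±∞}) → 𝒪*ℝ is given by U ↦ U ∩ (−∞,∞)) if and only if q(h'(−∞, ∞)) = ⊤. -/
open TopologicalSpace

/-- The pointed frame map `p : 𝒪⋆(ℝ ∪ {±∞}) → 𝒪⋆ℝ` of the inclusion of `ℝ` into
the extended reals, `U ↦ U ∩ (-∞, ∞)`. -/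
noncomputable def pMap : FrameHom (Opens EReal) (Opens ℝ) :=
  Opens.comap ⟨fun x : ℝ => (x : EReal), continuous_coe_real_ereal⟩

/-- The open set `(-∞, ∞)` of finite extended reals. -/
def finiteReals : Opens EReal := ⟨Set.Ioo ⊥ ⊤, isOpen_Ioo⟩

/-- Let `q : M → L` be a dense surjective pointed frame homomorphism and
`h' : 𝒪⋆(ℝ ∪ {±∞}) → M` a pointed frame homomorphism. Then `h'` drops to a
pointed frame homomorphism `h : 𝒪⋆ℝ → L` with `h ∘ p = q ∘ h'` iff
`q(h'(-∞, ∞)) = ⊤`. -/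
theorem stmt10 (M L : Type*) [Order.Frame M] [Order.Frame L]
    (ptM : FrameHom M Prop) (ptL : FrameHom L Prop)
    (q : FrameHom M L)
    (hq_surj : Function.Surjective q)
    (hq_dense : ∀ x : M, q x = ⊥ → x = ⊥)
    (hq_pointed : ∀ x : M, ptL (q x) ↔ ptM x)
    (h' : FrameHom (Opens EReal) M)
    (hh'_pointed : ∀ U : Opens EReal, ptM (h' U) ↔ (0 : EReal) ∈ (U : Set EReal)) :
    (∃ h : FrameHom (Opens ℝ) L,
        (∀ U : Opens ℝ, ptL (h U) ↔ (0 : ℝ) ∈ (U : Set ℝ)) ∧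
        ∀ U : Opens EReal, h (pMap U) = q (h' U)) ↔
      q (h' finiteReals) = ⊤ := by
  constructor
  · rintro ⟨h, -, hcomm⟩
    have := hcomm finiteReals
    have hp : pMap finiteReals = ⊤ := by
      apply Opens.ext
      ext x
      simp [pMap, finiteReals, Opens.comap, EReal.bot_lt_coe, EReal.coe_lt_top]
    rw [hp, map_top] at this
    exact this.symm
  · intro htop
    have hinj : Function.Injective (fun x : ℝ => (x : EReal)) := EReal.coe_injective
    set e : Opens ℝ → Opens EReal := fun U =>
      ⟨(fun x : ℝ => (x : EReal)) '' (U : Set ℝ),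
        EReal.isOpenEmbedding_coe.isOpenMap _ U.isOpen⟩ with he
    have hetop : e ⊤ = finiteReals := by
      apply Opens.ext
      simp only [he, Opens.coe_top, Set.image_univ, finiteReals]
      exact EReal.range_coe_eq_Ioo
    refine ⟨⟨⟨⟨fun U => q (h' (e U)), ?_⟩, ?_⟩, ?_⟩, ?_, ?_⟩
    · intro U V
      have : e (U ⊓ V) = e U ⊓ e V := by
        apply Opens.ext
        simp only [he, Opens.coe_inf]
        exact Set.image_inter hinj
      simp only [this, map_inf]
    · simp only [hetop, htop]
    · intro S
      have : e (sSup S) = sSup (e '' S) := by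
        apply Opens.ext
        simp only [he, Opens.coe_sSup, Set.sUnion_image, Set.image_iUnion]
        aesop
      simp only [this, map_sSup, map_iSup, sSup_image, iSup_image]
    · intro U
      have hpt : ((0 : EReal) ∈ (e U : Set EReal)) ↔ (0 : ℝ) ∈ (U : Set ℝ) := by
        constructor
        · rintro ⟨x, hx, hx0⟩
          have : x = 0 := hinj (by simpa using hx0)
          rwa [this] at hx
        · intro h0
          exact ⟨0, h0, by simp⟩
      show ptL (q (h' (e U))) ↔ _
      rw [hq_pointed, hh'_pointed, hpt]
    · intro U
      show q (h' (e (pMap U))) = q (h' U)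
      have : e (pMap U) = U ⊓ finiteReals := by
        apply Opens.ext
        simp only [he, pMap, Opens.comap, Opens.coe_inf]
        rw [show (finiteReals : Set EReal) = Set.range (fun x : ℝ => (x : EReal)) from EReal.range_coe_eq_Ioo.symm]
        exact Set.image_preimage_eq_inter_range
      rw [this, map_inf, map_inf, htop, inf_top_eq]
end

section
/- An element u ≥ 0 of R₀L is a unital component (i.e., u = (2u)̄) if and only if u = χ_x for some complemented element x of L with *(x) = ⊥, where χ_x is the characteristic function of x. -/
open TopologicalSpace

/-- The truncation operation on frame-valued functions on `𝒪ℝ`, induced by the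
continuous map `x ↦ x ∧ 1` via `w(f)(V) = ⋁_{w(U) ⊆ V} f(U)`. -/
noncomputable def truncMap {L : Type*} [Order.Frame L] (g : Opens ℝ → L)
    (V : Opens ℝ) : L :=
  ⨆ U : Opens ℝ, ⨆ _ : (fun x : ℝ => min x 1) '' (U : Set ℝ) ⊆ (V : Set ℝ), g U

/-- The scalar double `2u` of `u ∈ R₀L`, given by `(2u)(U) = u({x | 2x ∈ U})`,
so that `(2u)(r, ∞) = u(r/2, ∞)`. -/
noncomputable def doubleMap {L : Type*} [Order.Frame L] (u : FrameHom (Opens ℝ) L) :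
    FrameHom (Opens ℝ) L :=
  u.comp (Opens.comap ⟨fun x : ℝ => 2 * x, by continuity⟩)

open Classical in
/-- The characteristic function `χ_x ∈ R₀L` of a complemented element `x` of `L`
with complement `y`: `χ_x(U) = ⊤` if `0, 1 ∈ U`; `= x` if `1 ∈ U`, `0 ∉ U`;
`= y` if `0 ∈ U`, `1 ∉ U`; `= ⊥` if `0, 1 ∉ U`. -/
noncomputable def chi {L : Type*} [Order.Frame L] (x y : L) (U : Opens ℝ) : L :=
  if (0 : ℝ) ∈ (U : Set ℝ) then (if (1 : ℝ) ∈ (U : Set ℝ) then ⊤ else y)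
  else (if (1 : ℝ) ∈ (U : Set ℝ) then x else ⊥)

/-- The map `x ↦ min (2x) 1` as a continuous map. -/
noncomputable def cmap : C(ℝ, ℝ) :=
  ⟨fun x : ℝ => min (2 * x) 1, by continuity⟩

/-- The map `x ↦ min x 1` as a continuous map. -/
noncomputable def wmap : C(ℝ, ℝ) := ⟨fun x : ℝ => min x 1, by continuity⟩

lemma trunc_eq {L : Type*} [Order.Frame L] (u : FrameHom (Opens ℝ) L) (V : Opens ℝ) :
    truncMap (doubleMap u) V = u (Opens.comap cmap V) := by
  unfold truncMap doubleMap
  apply le_antisymm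
  · refine iSup_le fun U => iSup_le fun hU => ?_
    rw [FrameHom.comp_apply]
    refine OrderHomClass.mono u ?_
    intro t ht
    exact hU ⟨2 * t, ht, rfl⟩
  · refine le_iSup_of_le (Opens.comap wmap V) (le_iSup_of_le ?_ ?_)
    · rintro s ⟨t, ht, rfl⟩
      exact ht
    · rw [FrameHom.comp_apply]
      refine le_of_eq (congrArg u ?_)
      apply Opens.ext
      rfl

lemma umono {L : Type*} [Order.Frame L] (u : FrameHom (Opens ℝ) L) {a b : Opens ℝ}
    (h : a ≤ b) : u a ≤ u b := OrderHomClass.mono u h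

/-- An element `u ≥ 0` of `R₀L` is a unital component (i.e. `u = (2u)‾`) iff
`u = χ_x` for some complemented element `x` of `L` with `*(x) = ⊥`. -/
theorem stmt12 (L : Type*) [Order.Frame L]
    (pt : FrameHom L Prop)
    (u : FrameHom (Opens ℝ) L)
    (hpointed : ∀ U : Opens ℝ, pt (u U) ↔ (0 : ℝ) ∈ (U : Set ℝ))
    (hpos : u (Oiio 0) = ⊥) :
    (∀ U : Opens ℝ, u U = truncMap (doubleMap u) U) ↔
      ∃ x y : L, x ⊔ y = ⊤ ∧ x ⊓ y = ⊥ ∧ ¬ pt x ∧ ∀ U : Opens ℝ, u U = chi x y U := by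
  constructor
  · intro h
    replace h : ∀ V : Opens ℝ, u V = u (Opens.comap cmap V) :=
      fun V => (h V).trans (trunc_eq u V)
    -- basic comap computations
    have comap_Ioi : ∀ r : ℝ, r < 1 → Opens.comap cmap (Oioi r) = Oioi (r / 2) := by
      intro r hr
      apply Opens.ext
      ext t
      simp only [Opens.coe_comap, cmap, ContinuousMap.coe_mk, Set.mem_preimage, Oioi,
        Opens.coe_mk, Set.mem_Ioi, lt_min_iff]
      constructor
      · rintro ⟨h1, _⟩; linarith
      · intro ht; exact ⟨by linarith, hr⟩
    have comap_Iio : ∀ r : ℝ, r ≤ 1 → Opens.comap cmap (Oiio r) = Oiio (r / 2) := by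
      intro r hr
      apply Opens.ext
      ext t
      simp only [Opens.coe_comap, cmap, ContinuousMap.coe_mk, Set.mem_preimage, Oiio,
        Opens.coe_mk, Set.mem_Iio, min_lt_iff]
      constructor
      · rintro (h1 | h1)
        · linarith
        · linarith
      · intro ht; left; linarith
    have hIoi_step : ∀ r : ℝ, r < 1 → u (Oioi r) = u (Oioi (r / 2)) := by
      intro r hr; rw [h (Oioi r), comap_Ioi r hr]
    have hIio_step : ∀ r : ℝ, r ≤ 1 → u (Oiio r) = u (Oiio (r / 2)) := by
      intro r hr; rw [h (Oiio r), comap_Iio r hr]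
    have hIoi1 : u (Oioi 1) = ⊥ := by
      rw [h (Oioi 1)]
      have : Opens.comap cmap (Oioi 1) = ⊥ := by
        apply Opens.ext
        ext t
        simp only [Opens.coe_comap, cmap, ContinuousMap.coe_mk, Set.mem_preimage, Oioi,
          Opens.coe_mk, Set.mem_Ioi, Opens.coe_bot, Set.mem_empty_iff_false, iff_false,
          not_lt, lt_min_iff]
        rintro ⟨-, h2⟩
        exact lt_irrefl _ h2
      rw [this, map_bot]
    set x := u (Oioi (1 / 2)) with hxdef
    set y := u (Oiio (1 / 2)) with hydef
    have Oioi_mono : ∀ {a b : ℝ}, a ≤ b → Oioi b ≤ Oioi a := by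
      intro a b hab t ht
      exact lt_of_le_of_lt hab ht
    have Oiio_mono : ∀ {a b : ℝ}, a ≤ b → Oiio a ≤ Oiio b := by
      intro a b hab t ht
      exact lt_of_lt_of_le ht hab
    have pow_x : ∀ n : ℕ, u (Oioi ((1 / 2 : ℝ) ^ (n + 1))) = x := by
      intro n
      induction n with
      | zero => rw [pow_one]
      | succ n ih =>
        have h1 : ((1 / 2 : ℝ) ^ (n + 2)) = ((1 / 2 : ℝ) ^ (n + 1)) / 2 := by ring
        have h2 : ((1 / 2 : ℝ) ^ (n + 1)) < 1 := by
          apply pow_lt_one₀ (by norm_num) (by norm_num)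
          omega
        rw [h1, ← hIoi_step _ h2, ih]
    have pow_y : ∀ n : ℕ, u (Oiio ((1 / 2 : ℝ) ^ (n + 1))) = y := by
      intro n
      induction n with
      | zero => rw [pow_one]
      | succ n ih =>
        have h1 : ((1 / 2 : ℝ) ^ (n + 2)) = ((1 / 2 : ℝ) ^ (n + 1)) / 2 := by ring
        have h2 : ((1 / 2 : ℝ) ^ (n + 1)) ≤ 1 := by
          apply le_of_lt
          apply pow_lt_one₀ (by norm_num) (by norm_num)
          omega
        rw [h1, ← hIio_step _ h2, ih]
    have hx_all : ∀ s : ℝ, 0 < s → s < 1 → u (Oioi s) = x := by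
      intro s h0 h1
      apply le_antisymm
      · obtain ⟨n, hn⟩ := exists_pow_lt_of_lt_one h0 (by norm_num : (1 / 2 : ℝ) < 1)
        have hle : ((1 / 2 : ℝ) ^ (n + 1)) ≤ s := by
          have hp : (0 : ℝ) < (1 / 2 : ℝ) ^ n := by positivity
          have : ((1 / 2 : ℝ) ^ (n + 1)) = (1 / 2 : ℝ) ^ n * (1 / 2) := by ring
          nlinarith
        calc u (Oioi s) ≤ u (Oioi ((1 / 2 : ℝ) ^ (n + 1))) := umono u (Oioi_mono hle)
          _ = x := pow_x n
      · rw [hIoi_step s h1]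
        exact umono u (Oioi_mono (by linarith))
    have hy_all : ∀ s : ℝ, 0 < s → s ≤ 1 → u (Oiio s) = y := by
      intro s h0 h1
      apply le_antisymm
      · rw [hIio_step s h1]
        exact umono u (Oiio_mono (by linarith))
      · obtain ⟨n, hn⟩ := exists_pow_lt_of_lt_one h0 (by norm_num : (1 / 2 : ℝ) < 1)
        have hle : ((1 / 2 : ℝ) ^ (n + 1)) ≤ s := by
          have hp : (0 : ℝ) < (1 / 2 : ℝ) ^ n := by positivity
          have : ((1 / 2 : ℝ) ^ (n + 1)) = (1 / 2 : ℝ) ^ n * (1 / 2) := by ring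
          nlinarith
        calc y = u (Oiio ((1 / 2 : ℝ) ^ (n + 1))) := (pow_y n).symm
          _ ≤ u (Oiio s) := umono u (Oiio_mono hle)
    have hIoi0 : u (Oioi 0) = x := by
      have hsup : Oioi 0 = ⨆ n : ℕ, Oioi ((1 / 2 : ℝ) ^ (n + 1)) := by
        apply Opens.ext
        rw [Opens.coe_iSup]
        ext t
        simp only [Oioi, Opens.coe_mk, Set.mem_Ioi, Set.mem_iUnion]
        constructor
        · intro ht
          obtain ⟨n, hn⟩ := exists_pow_lt_of_lt_one ht (by norm_num : (1 / 2 : ℝ) < 1)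
          refine ⟨n, ?_⟩
          have hp : (0 : ℝ) < (1 / 2 : ℝ) ^ n := by positivity
          have : ((1 / 2 : ℝ) ^ (n + 1)) = (1 / 2 : ℝ) ^ n * (1 / 2) := by ring
          nlinarith
        · rintro ⟨n, hn⟩
          have hp : (0 : ℝ) < (1 / 2 : ℝ) ^ (n + 1) := by positivity
          linarith
      rw [hsup, map_iSup]
      simp only [pow_x]
      exact ciSup_const
    have hxy_inf : x ⊓ y = ⊥ := by
      rw [hxdef, hydef, ← map_inf]
      have : Oioi (1 / 2) ⊓ Oiio (1 / 2 : ℝ) = ⊥ := by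
        apply Opens.ext
        ext t
        simp only [Opens.coe_inf, Oioi, Oiio, Opens.coe_mk, Set.mem_inter_iff, Set.mem_Ioi,
          Set.mem_Iio, Opens.coe_bot, Set.mem_empty_iff_false, iff_false, not_and]
        intro h1 h2
        linarith
      rw [this, map_bot]
    have hxy_sup : x ⊔ y = ⊤ := by
      have hx4 : u (Oioi (1 / 4)) = x := hx_all _ (by norm_num) (by norm_num)
      rw [hydef, ← hx4, ← map_sup]
      have : Oioi (1 / 4) ⊔ Oiio (1 / 2 : ℝ) = ⊤ := by
        apply Opens.ext
        ext t
        simp only [Opens.coe_sup, Oioi, Oiio, Opens.coe_mk, Set.mem_union, Set.mem_Ioi,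
          Set.mem_Iio, Opens.coe_top, Set.mem_univ, iff_true]
        by_cases ht : t < 1 / 2
        · exact Or.inr ht
        · exact Or.inl (by linarith [not_lt.mp ht])
      rw [this, map_top]
    have hptx : ¬ pt x := by
      intro hp
      have := (hpointed (Oioi (1 / 2))).mp hp
      simp only [Oioi, Opens.coe_mk, Set.mem_Ioi] at this
      linarith
    -- neighborhood lower bounds
    have nbhd0 : ∀ U : Opens ℝ, (0 : ℝ) ∈ (U : Set ℝ) → y ≤ u U := by
      intro U h0
      obtain ⟨ε, hε, hball⟩ := Metric.isOpen_iff.mp U.isOpen 0 h0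
      set δ : ℝ := min (ε / 2) (1 / 2) with hδdef
      have hδ0 : 0 < δ := by
        apply lt_min (by linarith) (by norm_num)
      have hδ1 : δ ≤ 1 / 2 := min_le_right _ _
      have hδε : δ < ε := lt_of_le_of_lt (min_le_left _ _) (by linarith)
      have hkey : Oiio δ = (⟨Set.Ioo (-δ) δ, isOpen_Ioo⟩ : Opens ℝ) ⊔ Oiio 0 := by
        apply Opens.ext
        ext t
        simp only [Oiio, Opens.coe_mk, Set.mem_Iio, Opens.coe_sup, Set.mem_union,
          Set.mem_Ioo]
        constructor
        · intro ht
          by_cases ht0 : t < 0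
          · exact Or.inr ht0
          · exact Or.inl ⟨by linarith [not_lt.mp ht0], ht⟩
        · rintro (⟨-, h2⟩ | h2)
          · exact h2
          · linarith
      have huIoo : u (⟨Set.Ioo (-δ) δ, isOpen_Ioo⟩ : Opens ℝ) = y := by
        have := hy_all δ hδ0 (by linarith)
        rw [hkey, map_sup, hpos, sup_bot_eq] at this
        exact this
      rw [← huIoo]
      apply umono u
      intro t ht
      apply hball
      simp only [Metric.mem_ball, Real.dist_eq, sub_zero]
      have ht' : t ∈ Set.Ioo (-δ) δ := ht
      rw [abs_lt]
      exact ⟨by linarith [ht'.1], by linarith [ht'.2]⟩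
    have nbhd1 : ∀ U : Opens ℝ, (1 : ℝ) ∈ (U : Set ℝ) → x ≤ u U := by
      intro U h1
      obtain ⟨ε, hε, hball⟩ := Metric.isOpen_iff.mp U.isOpen 1 h1
      set δ : ℝ := min (ε / 2) (1 / 2) with hδdef
      have hδ0 : 0 < δ := by
        apply lt_min (by linarith) (by norm_num)
      have hδ1 : δ ≤ 1 / 2 := min_le_right _ _
      have hδε : δ < ε := lt_of_le_of_lt (min_le_left _ _) (by linarith)
      have hkey : Oioi (1 - δ) = (⟨Set.Ioo (1 - δ) (1 + δ), isOpen_Ioo⟩ : Opens ℝ) ⊔ Oioi 1 := by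
        apply Opens.ext
        ext t
        simp only [Oioi, Opens.coe_mk, Set.mem_Ioi, Opens.coe_sup, Set.mem_union,
          Set.mem_Ioo]
        constructor
        · intro ht
          by_cases ht1 : t < 1 + δ
          · exact Or.inl ⟨ht, ht1⟩
          · exact Or.inr (by linarith [not_lt.mp ht1])
        · rintro (⟨h2, -⟩ | h2)
          · exact h2
          · linarith
      have huIoo : u (⟨Set.Ioo (1 - δ) (1 + δ), isOpen_Ioo⟩ : Opens ℝ) = x := by
        have := hx_all (1 - δ) (by linarith) (by linarith)
        rw [hkey, map_sup, hIoi1, sup_bot_eq] at this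
        exact this
      rw [← huIoo]
      apply umono u
      intro t ht
      apply hball
      simp only [Metric.mem_ball, Real.dist_eq]
      have ht' : t ∈ Set.Ioo (1 - δ) (1 + δ) := ht
      rw [abs_lt]
      exact ⟨by linarith [ht'.1], by linarith [ht'.2]⟩
    -- upper bounds
    have hIio1 : u (Oiio 1) = y := hy_all 1 (by norm_num) le_rfl
    have up_no1 : ∀ U : Opens ℝ, (1 : ℝ) ∉ (U : Set ℝ) → u U ≤ y := by
      intro U h1
      have hle : U ≤ Oiio 1 ⊔ Oioi 1 := by
        intro t ht
        rcases lt_trichotomy t 1 with h' | h' | h'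
        · exact Or.inl h'
        · exact absurd ht (h' ▸ h1)
        · exact Or.inr h'
      calc u U ≤ u (Oiio 1 ⊔ Oioi 1) := umono u hle
        _ = u (Oiio 1) ⊔ u (Oioi 1) := map_sup u _ _
        _ = y := by rw [hIio1, hIoi1, sup_bot_eq]
    have up_no0 : ∀ U : Opens ℝ, (0 : ℝ) ∉ (U : Set ℝ) → u U ≤ x := by
      intro U h0
      have hle : U ≤ Oiio 0 ⊔ Oioi 0 := by
        intro t ht
        rcases lt_trichotomy t 0 with h' | h' | h'
        · exact Or.inl h'
        · exact absurd ht (h' ▸ h0)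
        · exact Or.inr h'
      calc u U ≤ u (Oiio 0 ⊔ Oioi 0) := umono u hle
        _ = u (Oiio 0) ⊔ u (Oioi 0) := map_sup u _ _
        _ = x := by rw [hpos, hIoi0, bot_sup_eq]
    have hmid : u (Oioo 0 1) = ⊥ := by
      have : Oioo 0 1 = Oioi 0 ⊓ Oiio 1 := by
        apply Opens.ext
        ext t
        simp only [Oioo, Oioi, Oiio, Opens.coe_mk, Set.mem_Ioo, Opens.coe_inf,
          Set.mem_inter_iff, Set.mem_Ioi, Set.mem_Iio]
      rw [this, map_inf, hIoi0, hIio1, hxy_inf]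
    have up_none : ∀ U : Opens ℝ, (0 : ℝ) ∉ (U : Set ℝ) → (1 : ℝ) ∉ (U : Set ℝ) → u U = ⊥ := by
      intro U h0 h1
      have hle : U ≤ Oiio 0 ⊔ (Oioo 0 1 ⊔ Oioi 1) := by
        intro t ht
        rcases lt_trichotomy t 0 with h' | h' | h'
        · exact Or.inl h'
        · exact absurd ht (h' ▸ h0)
        · refine Or.inr ?_
          rcases lt_trichotomy t 1 with h'' | h'' | h''
          · exact Or.inl ⟨h', h''⟩
          · exact absurd ht (h'' ▸ h1)
          · exact Or.inr h''
      have := umono u hle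
      rw [map_sup, map_sup, hpos, hmid, hIoi1] at this
      simpa using this
    refine ⟨x, y, hxy_sup, hxy_inf, hptx, ?_⟩
    intro U
    unfold chi
    split_ifs with h0 h1 h1
    · apply le_antisymm le_top
      rw [← hxy_sup]
      exact sup_le (nbhd1 U h1) (nbhd0 U h0)
    · exact le_antisymm (up_no1 U h1) (nbhd0 U h0)
    · exact le_antisymm (up_no0 U h0) (nbhd1 U h1)
    · exact up_none U h0 h1
  · rintro ⟨x, y, -, -, -, hu⟩ U
    rw [trunc_eq, hu U, hu (Opens.comap cmap U)]
    have h0 : ((0 : ℝ) ∈ ((Opens.comap cmap U : Opens ℝ) : Set ℝ)) ↔ (0 : ℝ) ∈ (U : Set ℝ) := by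
      rw [Opens.coe_comap]
      simp only [cmap, ContinuousMap.coe_mk, Set.mem_preimage]
      norm_num
    have h1 : ((1 : ℝ) ∈ ((Opens.comap cmap U : Opens ℝ) : Set ℝ)) ↔ (1 : ℝ) ∈ (U : Set ℝ) := by
      rw [Opens.coe_comap]
      simp only [cmap, ContinuousMap.coe_mk, Set.mem_preimage]
      norm_num
    unfold chi
    rw [h0, h1]
end

section
/- For a positive element g of R₀L, the following are equivalent: (i) there exists ε > 0 with g(0, ∞) = g(ε, ∞); (ii) there exists ε > 0 with g(0, ε) = ⊥. -/
open TopologicalSpace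

/-- For a positive element `g` of `R₀L`, the following are equivalent:
(i) there exists `ε > 0` with `g(0, ∞) = g(ε, ∞)`;
(ii) there exists `ε > 0` with `g(0, ε) = ⊥`. -/
theorem stmt13 (L : Type*) [Order.Frame L]
    (g : FrameHom (Opens ℝ) L)
    (hpos : g (Oiio 0) = ⊥) :
    (∃ ε : ℝ, 0 < ε ∧ g (Oioi 0) = g (Oioi ε)) ↔
      (∃ ε : ℝ, 0 < ε ∧ g (Oioo 0 ε) = ⊥) := by
  constructor
  · rintro ⟨ε, hε, h⟩
    refine ⟨ε, hε, ?_⟩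
    have h1 : g (Oioo 0 ε) ≤ g (Oioi ε) := by
      rw [← h]
      exact OrderHomClass.mono g (fun x hx => hx.1)
    have h2 : g (Oioo 0 ε) ⊓ g (Oioi ε) = ⊥ := by
      rw [← map_inf, ← map_bot g]
      congr 1
      apply Opens.ext
      simp only [Oioo, Oioi, Opens.coe_inf, Opens.coe_bot]
      ext x
      simp only [Set.mem_inter_iff, Set.mem_Ioo, Set.mem_Ioi, Set.mem_empty_iff_false,
        iff_false, not_and]
      rintro ⟨_, h2⟩ h3
      exact absurd h3 (not_lt.2 h2.le)
    rw [← inf_eq_left.2 h1, h2]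
  · rintro ⟨ε, hε, h⟩
    refine ⟨ε / 2, by linarith, ?_⟩
    have hU : Oioi 0 = Oioo 0 ε ⊔ Oioi (ε / 2) := by
      apply Opens.ext
      simp only [Oioo, Oioi, Opens.coe_sup]
      ext x
      simp only [Opens.coe_mk, Set.mem_Ioi, Set.mem_union, Set.mem_Ioo]
      constructor
      · intro hx
        rcases lt_or_ge x ε with h1 | h1
        · exact Or.inl ⟨hx, h1⟩
        · right; linarith
      · rintro (⟨h1, _⟩ | h1)
        · exact h1
        · linarith
    rw [hU, map_sup, h, bot_sup_eq]
end

section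
/- For a positive element g of R₀L, if there exists ε > 0 with g(ε, ∞) = g(0, ∞) =: x, and n is a positive integer with 1/n < ε, then (n·g ∧ 1-truncation) equals the characteristic function of x: (ng)̄(s, ∞) = ⊥ for s ≥ 1, = x for 0 ≤ s < 1, and = ⊤ for s < 0; in particular (ng)̄ is a unital component and x is complemented in L. -/
open TopologicalSpace

/-- The scalar multiple `c • g` of `g ∈ R₀L` for `c > 0`, given by
`(c • g)(U) = g({x | c * x ∈ U})`, so that `(c • g)(r, ∞) = g(r/c, ∞)`. -/
noncomputable def scaleMap {L : Type*} [Order.Frame L] (c : ℝ)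
    (g : FrameHom (Opens ℝ) L) : FrameHom (Opens ℝ) L :=
  g.comp (Opens.comap ⟨fun x : ℝ => c * x, by continuity⟩)

noncomputable def Wop (c : ℝ) (U : Opens ℝ) : Opens ℝ :=
  ⟨(fun x : ℝ => min (c * x) 1) ⁻¹' (U : Set ℝ),
    U.isOpen.preimage (by continuity)⟩

lemma trunc_scale {L : Type*} [Order.Frame L] (c : ℝ) (g : FrameHom (Opens ℝ) L)
    (U : Opens ℝ) : truncMap (scaleMap c g) U = g (Wop c U) := by
  unfold truncMap
  apply le_antisymm
  · refine iSup_le fun V => iSup_le fun hV => ?_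
    simp only [scaleMap, FrameHom.comp_apply]
    apply OrderHomClass.mono g
    rw [← SetLike.coe_subset_coe, Opens.coe_comap]
    intro x hx
    exact hV ⟨c * x, hx, rfl⟩
  · refine le_iSup₂_of_le (Opens.comap ⟨fun x : ℝ => min x 1, by continuity⟩ U) ?_ ?_
    · rw [Opens.coe_comap]
      exact Set.image_preimage_subset _ _
    · simp only [scaleMap, FrameHom.comp_apply]
      apply le_of_eq
      congr 1

/-- For a positive `g ∈ R₀L`: if there is `ε > 0` with `g(ε, ∞) = g(0, ∞) =: x`
and `n` is a positive integer with `1/n < ε`, then the truncation `(ng)‾`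
is the characteristic function of `x`: `(ng)‾(s, ∞) = ⊥` for `s ≥ 1`, `= x`
for `0 ≤ s < 1`, `= ⊤` for `s < 0`; in particular `x` is complemented in `L`
and `(ng)‾ = χ_x` is a unital component. -/
theorem stmt14 (L : Type*) [Order.Frame L]
    (g : FrameHom (Opens ℝ) L)
    (hpos : g (Oiio 0) = ⊥)
    (ε : ℝ) (hε : 0 < ε) (hgε : g (Oioi ε) = g (Oioi 0))
    (n : ℕ) (hn : 0 < n) (hnε : 1 / (n : ℝ) < ε) :
    (∀ s : ℝ,
      (1 ≤ s → truncMap (scaleMap (n : ℝ) g) (Oioi s) = ⊥) ∧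
      (0 ≤ s → s < 1 → truncMap (scaleMap (n : ℝ) g) (Oioi s) = g (Oioi 0)) ∧
      (s < 0 → truncMap (scaleMap (n : ℝ) g) (Oioi s) = ⊤)) ∧
    ∃ y : L, g (Oioi 0) ⊔ y = ⊤ ∧ g (Oioi 0) ⊓ y = ⊥ ∧
      ∀ U : Opens ℝ, truncMap (scaleMap (n : ℝ) g) U = chi (g (Oioi 0)) y U := by
  have hnpos : (0:ℝ) < n := by exact_mod_cast hn
  have hinv : (0:ℝ) < 1 / n := by positivity
  have hmono : ∀ {A B : Opens ℝ}, (A : Set ℝ) ⊆ (B : Set ℝ) → g A ≤ g B :=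
    fun h => OrderHomClass.mono g (SetLike.coe_subset_coe.mp h)
  -- g (Ioi (1/n)) = g (Ioi 0)
  have h1n : g (Oioi (1/n)) = g (Oioi 0) := by
    apply le_antisymm
    · exact hmono (Set.Ioi_subset_Ioi hinv.le)
    · rw [← hgε]; exact hmono (Set.Ioi_subset_Ioi hnε.le)
  -- g (Ioi s) = ⊤ for s < 0
  have htop : ∀ s : ℝ, s < 0 → g (Oioi s) = ⊤ := by
    intro s hs
    have hcov : (Oiio 0 ⊔ Oioi s : Opens ℝ) = ⊤ := by
      apply Opens.ext
      simp only [Opens.coe_sup, Opens.coe_top, Oiio, Oioi]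
      ext z
      simp only [Set.mem_union, Set.mem_Iio, Set.mem_Ioi, Set.mem_univ, iff_true]
      rcases lt_or_ge z 0 with h | h
      · exact Or.inl h
      · exact Or.inr (lt_of_lt_of_le hs h)
    have h2 : g (Oiio 0 ⊔ Oioi s) = ⊤ := by rw [hcov, map_top]
    rwa [map_sup, hpos, bot_sup_eq] at h2
  -- g (Ioo c ε) = ⊥ for 0 ≤ c
  have hIoo : ∀ c : ℝ, 0 ≤ c → g (Oioo c ε) = ⊥ := by
    intro c hc
    have hle : g (Oioo c ε) ≤ g (Oioi ε) := by
      rw [hgε]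
      exact hmono (fun z hz => lt_of_le_of_lt hc hz.1)
    have hinf : g (Oioo c ε) ⊓ g (Oioi ε) = ⊥ := by
      rw [← map_inf]
      have heq : (Oioo c ε ⊓ Oioi ε : Opens ℝ) = ⊥ := by
        apply Opens.ext
        simp only [Opens.coe_inf, Opens.coe_bot, Oioo, Oioi]
        ext z
        simp only [Opens.coe_mk, Set.mem_inter_iff, Set.mem_Ioo, Set.mem_Ioi,
          Set.mem_empty_iff_false, iff_false, not_and, and_imp]
        intro _ h2 h3; linarith
      rw [heq, map_bot]
    calc g (Oioo c ε) = g (Oioo c ε) ⊓ g (Oioi ε) := (inf_eq_left.mpr hle).symm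
      _ = ⊥ := hinf
  -- complement facts
  have hcompl1 : g (Oioi 0) ⊔ g (Oiio ε) = ⊤ := by
    rw [← h1n, ← map_sup]
    have hcov : (Oioi (1/n) ⊔ Oiio ε : Opens ℝ) = ⊤ := by
      apply Opens.ext
      simp only [Opens.coe_sup, Opens.coe_top, Oiio, Oioi]
      ext z
      simp only [Set.mem_union, Set.mem_Iio, Set.mem_Ioi, Set.mem_univ, iff_true]
      rcases lt_or_ge z ε with h | h
      · exact Or.inr h
      · exact Or.inl (lt_of_lt_of_le hnε h)
    rw [hcov, map_top]
  have hcompl2 : g (Oioi 0) ⊓ g (Oiio ε) = ⊥ := by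
    rw [← h1n, ← map_inf]
    have heq : (Oioi (1/n) ⊓ Oiio ε : Opens ℝ) = Oioo (1/n) ε := by
      apply Opens.ext
      simp only [Opens.coe_inf, Oiio, Oioi, Oioo]
      exact Set.Ioi_inter_Iio
    rw [heq]
    exact hIoo _ hinv.le
  -- upper part of W: (1/n, ∞) ⊆ W when 1 ∈ U
  have hWtop : ∀ U : Opens ℝ, (1:ℝ) ∈ (U : Set ℝ) →
      g (Oioi 0) ≤ g (Wop n U) := by
    intro U h1
    rw [← h1n]
    apply hmono
    intro z hz
    have hz0 : 1/(n:ℝ) < z := hz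
    have hz' : (1:ℝ) < n * z := by
      rw [div_lt_iff₀ hnpos] at hz0
      nlinarith
    show min ((n:ℝ) * z) 1 ∈ (U : Set ℝ)
    rw [min_eq_right hz'.le]
    exact h1
  -- the key computation
  have key : ∀ U : Opens ℝ, g (Wop n U) = chi (g (Oioi 0)) (g (Oiio ε)) U := by
    intro U
    by_cases h0 : (0:ℝ) ∈ (U : Set ℝ) <;> by_cases h1 : (1:ℝ) ∈ (U : Set ℝ)
    · -- 0 ∈ U, 1 ∈ U : top
      rw [chi, if_pos h0, if_pos h1]
      obtain ⟨δ, hδ, hball⟩ := Metric.isOpen_iff.mp U.isOpen 0 h0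
      obtain ⟨a, hapos, hna⟩ : ∃ a : ℝ, 0 < a ∧ (n:ℝ) * a = δ :=
        ⟨δ / n, by positivity, by field_simp⟩
      have hWmid : g (Oioo (-a) a) ≤ g (Wop n U) := by
        apply hmono
        intro z hz
        obtain ⟨hz1, hz2⟩ := hz
        show min ((n:ℝ) * z) 1 ∈ (U : Set ℝ)
        rcases le_or_gt ((n:ℝ) * z) 1 with hle | hlt
        · rw [min_eq_left hle]
          apply hball
          rw [Metric.mem_ball, Real.dist_eq, sub_zero, abs_lt]
          constructor
          · nlinarith
          · nlinarith
        · rw [min_eq_right hlt.le]; exact h1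
      have hcov : (⊤ : Opens ℝ) = Oiio 0 ⊔ (Oioo (-a) a ⊔ Oioi (a/2)) := by
        apply Opens.ext
        simp only [Opens.coe_sup, Opens.coe_top, Oiio, Oioo, Oioi]
        ext z
        simp only [Set.mem_univ, Set.mem_union, Set.mem_Iio, Set.mem_Ioo, Set.mem_Ioi, true_iff]
        rcases lt_or_ge z 0 with h | h
        · exact Or.inl h
        · rcases lt_or_ge z a with h2 | h2
          · exact Or.inr (Or.inl ⟨by linarith, h2⟩)
          · refine Or.inr (Or.inr ?_)
            show a/2 < z
            linarith
      apply top_unique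
      calc (⊤ : L) = g ⊤ := (map_top g).symm
        _ = g (Oiio 0) ⊔ (g (Oioo (-a) a) ⊔ g (Oioi (a/2))) := by
            rw [hcov, map_sup, map_sup]
        _ ≤ g (Wop n U) := by
            rw [hpos, bot_sup_eq]
            apply sup_le hWmid
            calc g (Oioi (a/2)) ≤ g (Oioi 0) := hmono (Set.Ioi_subset_Ioi (by positivity))
              _ ≤ g (Wop n U) := hWtop U h1
    · -- 0 ∈ U, 1 ∉ U : y
      rw [chi, if_pos h0, if_neg h1]
      obtain ⟨δ, hδ, hball⟩ := Metric.isOpen_iff.mp U.isOpen 0 h0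
      obtain ⟨a, hapos, haδ, ha1⟩ :
          ∃ a : ℝ, 0 < a ∧ (n:ℝ) * a ≤ δ ∧ (n:ℝ) * a < 1 := by
        refine ⟨min (δ / n) (1 / (2 * n)), lt_min (by positivity) (by positivity), ?_, ?_⟩
        · have h := min_le_left (δ / n) (1 / (2 * n))
          calc (n:ℝ) * min (δ / n) (1 / (2 * n)) ≤ n * (δ / n) := by nlinarith
            _ = δ := by field_simp
        · have h := min_le_right (δ / n) (1 / (2 * n))
          calc (n:ℝ) * min (δ / n) (1 / (2 * n)) ≤ n * (1 / (2 * n)) := by nlinarith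
            _ < 1 := by rw [mul_one_div]; rw [div_lt_one (by positivity)]; linarith
      have hWmid : g (Oioo (-a) a) ≤ g (Wop n U) := by
        apply hmono
        intro z hz
        obtain ⟨hz1, hz2⟩ := hz
        show min ((n:ℝ) * z) 1 ∈ (U : Set ℝ)
        have hnz : (n:ℝ) * z < 1 := by nlinarith
        rw [min_eq_left hnz.le]
        apply hball
        rw [Metric.mem_ball, Real.dist_eq, sub_zero, abs_lt]
        constructor
        · nlinarith
        · nlinarith
      apply le_antisymm
      · -- W ⊆ Iio ε
        apply hmono
        intro z hz
        show z ∈ Set.Iio ε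
        by_contra hc
        simp only [Set.mem_Iio, not_lt] at hc
        have : min ((n:ℝ) * z) 1 = 1 := by
          apply min_eq_right
          have h2 : 1/(n:ℝ) < z := lt_of_lt_of_le hnε hc
          rw [div_lt_iff₀ hnpos] at h2
          nlinarith
        exact h1 (this ▸ hz)
      · have hcov : (Oiio ε : Opens ℝ) ≤ Oiio 0 ⊔ (Oioo (-a) a ⊔ Oioo (a/2) ε) := by
          rw [← SetLike.coe_subset_coe]
          simp only [Opens.coe_sup, Oiio, Oioo]
          intro z hz
          have hz' : z < ε := hz
          simp only [Set.mem_union, Set.mem_Iio, Set.mem_Ioo]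
          rcases lt_or_ge z 0 with h | h
          · exact Or.inl h
          · rcases lt_or_ge z a with h2 | h2
            · exact Or.inr (Or.inl ⟨by linarith, h2⟩)
            · exact Or.inr (Or.inr ⟨by linarith, hz'⟩)
        calc g (Oiio ε) ≤ g (Oiio 0 ⊔ (Oioo (-a) a ⊔ Oioo (a/2) ε)) :=
              OrderHomClass.mono g hcov
          _ = ⊥ ⊔ (g (Oioo (-a) a) ⊔ ⊥) := by
              rw [map_sup, map_sup, hpos, hIoo (a/2) (by positivity)]
          _ = g (Oioo (-a) a) := by simp
          _ ≤ g (Wop n U) := hWmid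
    · -- 0 ∉ U, 1 ∈ U : x
      rw [chi, if_neg h0, if_pos h1]
      apply le_antisymm
      · have hsub : g (Wop n U) ≤ g (Oiio 0 ⊔ Oioi 0) := by
          apply hmono
          intro z hz
          have hz0 : z ≠ 0 := by
            rintro rfl
            apply h0
            have h00 : min ((n:ℝ) * 0) 1 ∈ (U : Set ℝ) := hz
            rwa [mul_zero, min_eq_left zero_le_one] at h00
          simp only [Opens.coe_sup, Oiio, Oioi, Set.mem_union, Set.mem_Iio, Set.mem_Ioi]
          rcases hz0.lt_or_gt with h | h
          · exact Or.inl h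
          · exact Or.inr h
        calc g (Wop n U) ≤ g (Oiio 0 ⊔ Oioi 0) := hsub
          _ = g (Oioi 0) := by rw [map_sup, hpos, bot_sup_eq]
      · exact hWtop U h1
    · -- 0 ∉ U, 1 ∉ U : ⊥
      rw [chi, if_neg h0, if_neg h1]
      have hsub : g (Wop n U) ≤ g (Oiio 0 ⊔ Oioo 0 ε) := by
        apply hmono
        intro z hz
        have hz0 : z ≠ 0 := by
          rintro rfl
          apply h0
          have h00 : min ((n:ℝ) * 0) 1 ∈ (U : Set ℝ) := hz
          rwa [mul_zero, min_eq_left zero_le_one] at h00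
        have hzε : z < ε := by
          by_contra hc
          push_neg at hc
          apply h1
          have h1' : min ((n:ℝ) * z) 1 = 1 := by
            apply min_eq_right
            have h2 : 1/(n:ℝ) < z := lt_of_lt_of_le hnε hc
            rw [div_lt_iff₀ hnpos] at h2
            nlinarith
          exact h1' ▸ hz
        simp only [Opens.coe_sup, Oiio, Oioo, Set.mem_union, Set.mem_Iio, Set.mem_Ioo]
        rcases hz0.lt_or_gt with h | h
        · exact Or.inl h
        · exact Or.inr ⟨h, hzε⟩
      have : g (Oiio 0 ⊔ Oioo 0 ε) = ⊥ := by
        rw [map_sup, hpos, hIoo 0 le_rfl, bot_sup_eq]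
      exact le_bot_iff.mp (this ▸ hsub)
  constructor
  · intro s
    refine ⟨fun hs => ?_, fun hs0 hs1 => ?_, fun hs => ?_⟩
    · rw [trunc_scale, key, chi, if_neg, if_neg]
      · show (1:ℝ) ∉ Set.Ioi s; simp only [Set.mem_Ioi, not_lt]; exact hs
      · show (0:ℝ) ∉ Set.Ioi s; simp only [Set.mem_Ioi, not_lt]; linarith
    · rw [trunc_scale, key, chi, if_neg, if_pos]
      · show (1:ℝ) ∈ Set.Ioi s; exact hs1
      · show (0:ℝ) ∉ Set.Ioi s; simp only [Set.mem_Ioi, not_lt]; exact hs0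
    · rw [trunc_scale, key, chi, if_pos, if_pos]
      · show (1:ℝ) ∈ Set.Ioi s; simp only [Set.mem_Ioi]; linarith
      · show (0:ℝ) ∈ Set.Ioi s; exact hs
  · exact ⟨g (Oiio ε), hcompl1, hcompl2, fun U => by rw [trunc_scale]; exact key U⟩
end

section
/- For a sequence (g_n) of positive elements of R₀L, the conditions (1) g_n = (g_{n+1}) ∧ n for all n (where g ∧ n := n·(g/n)̄), and (2) ⋁_n g_n(−∞, n) = ⊤ in L, hold if and only if (g_n) is the truncation sequence of some g ∈ R₀L, i.e., g_n = g ∧ n for all n; moreover such g is unique. -/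
open TopologicalSpace

/-- The truncation `g ∧ c` (i.e., `c·(g/c)‾`) on frame-valued functions on `𝒪ℝ`,
induced by the continuous map `x ↦ x ∧ c` via `w(f)(V) = ⋁_{w(U) ⊆ V} f(U)`. -/
noncomputable def wedgeMap {L : Type*} [Order.Frame L] (g : Opens ℝ → L) (c : ℝ)
    (V : Opens ℝ) : L :=
  ⨆ U : Opens ℝ, ⨆ _ : (fun x : ℝ => min x c) '' (U : Set ℝ) ⊆ (V : Set ℝ), g U

noncomputable def minC (c : ℝ) : C(ℝ, ℝ) := ⟨fun x => min x c, continuous_id.min continuous_const⟩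

lemma mem_comap_minC {c : ℝ} {V : Opens ℝ} {x : ℝ} :
    x ∈ Opens.comap (minC c) V ↔ min x c ∈ V := Opens.mem_comap

lemma wedge_eq {L : Type*} [Order.Frame L] (h : Opens ℝ → L) (hm : Monotone h)
    (c : ℝ) (V : Opens ℝ) :
    wedgeMap h c V = h (Opens.comap (minC c) V) := by
  apply le_antisymm
  · refine iSup_le fun U => iSup_le fun hU => hm ?_
    intro x hx
    exact hU ⟨x, hx, rfl⟩
  · refine le_iSup_of_le (Opens.comap (minC c) V) (le_iSup_of_le ?_ le_rfl)
    rintro y ⟨x, hx, rfl⟩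
    exact hx

lemma comap_minC_of_le {c : ℝ} {V : Opens ℝ} (hV : (V : Set ℝ) ⊆ Set.Iio c) :
    Opens.comap (minC c) V = V := by
  ext x
  simp only [SetLike.mem_coe, Opens.mem_comap]
  show min x c ∈ V ↔ x ∈ V
  constructor
  · intro hx
    have hlt : x < c := by
      rcases min_lt_iff.mp (Set.mem_Iio.mp (hV hx)) with h | h
      exacts [h, absurd h (lt_irrefl c)]
    rwa [min_eq_left hlt.le] at hx
  · intro hx
    rw [min_eq_left (le_of_lt (Set.mem_Iio.mp (hV hx)))]
    exact hx

lemma comap_minC_minC {b c : ℝ} (hbc : b ≤ c) (U : Opens ℝ) :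
    Opens.comap (minC c) (Opens.comap (minC b) U) = Opens.comap (minC b) U := by
  ext x
  simp only [SetLike.mem_coe, Opens.mem_comap]
  show min (min x c) b ∈ U ↔ min x b ∈ U
  rw [min_assoc, min_eq_right hbc]


lemma Oiio_mono {a b : ℝ} (h : a ≤ b) : Oiio a ≤ Oiio b := by
  intro x hx
  exact lt_of_lt_of_le hx h

lemma Oiio_subset {r : ℝ} : ((Oiio r : Opens ℝ) : Set ℝ) ⊆ Set.Iio r := fun _ h => h

lemma iSup_inter (U : Opens ℝ) : (⨆ n : ℕ, U ⊓ Oiio ((n : ℝ) + 1)) = U := by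
  apply le_antisymm (iSup_le fun n => inf_le_left)
  intro x hx
  obtain ⟨n, hn⟩ := exists_nat_gt x
  exact Opens.mem_iSup.mpr ⟨n, hx, lt_of_lt_of_le hn (by linarith)⟩

example {L : Type*} [Order.Frame L] (f : FrameHom (Opens ℝ) L) : Monotone f :=
  OrderHomClass.mono f

lemma inf_coe_subset {U : Opens ℝ} {r : ℝ} : ((U ⊓ Oiio r : Opens ℝ) : Set ℝ) ⊆ Set.Iio r :=
  fun _ h => h.2


/-- A sequence `(gₙ)_{n ≥ 1}` of positive elements of `R₀L` (here `g n`
denotes `g_{n+1}`) satisfies (1) `gₙ = g_{n+1} ∧ n` for all `n` and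
(2) `⋁ₙ gₙ(-∞, n) = ⊤` iff it is the truncation sequence of some (unique)
`g₀ ∈ R₀L`, i.e. `gₙ = g₀ ∧ n` for all `n`. -/
theorem stmt17 (L : Type*) [Order.Frame L]
    (g : ℕ → FrameHom (Opens ℝ) L)
    (hpos : ∀ n, g n (Oiio 0) = ⊥) :
    ((∀ n : ℕ, ∀ U : Opens ℝ, g n U = wedgeMap (g (n + 1)) ((n : ℝ) + 1) U) ∧
      ⨆ n : ℕ, g n (Oiio ((n : ℝ) + 1)) = ⊤) ↔
      ∃! g₀ : FrameHom (Opens ℝ) L,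
        g₀ (Oiio 0) = ⊥ ∧ ∀ n : ℕ, ∀ U : Opens ℝ, g n U = wedgeMap g₀ ((n : ℝ) + 1) U := by
  constructor
  · rintro ⟨h1, h2⟩
    have hw : ∀ n U, g n U = g (n + 1) (Opens.comap (minC ((n : ℝ) + 1)) U) := fun n U => by
      rw [h1 n U, wedge_eq _ (OrderHomClass.mono (g (n + 1)))]
    have agree : ∀ n k : ℕ, n ≤ k → ∀ V : Opens ℝ,
        (V : Set ℝ) ⊆ Set.Iio ((n : ℝ) + 1) → g n V = g k V := by
      intro n k hnk
      induction k, hnk using Nat.le_induction with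
      | base => intro V _; rfl
      | succ k hk ih =>
        intro V hV
        rw [ih V hV, hw k V, comap_minC_of_le
          (hV.trans (Set.Iio_subset_Iio (by exact_mod_cast (add_le_add_iff_right (1 : ℝ)).mpr (Nat.cast_le.mpr hk))))]
    have iter : ∀ n k : ℕ, n + 1 ≤ k → ∀ U : Opens ℝ,
        g n U = g k (Opens.comap (minC ((n : ℝ) + 1)) U) := by
      intro n k hnk
      induction k, hnk using Nat.le_induction with
      | base => exact hw n
      | succ k hk ih =>
        intro U
        rw [ih U, hw k, comap_minC_minC
          (by exact_mod_cast (add_le_add_iff_right (1 : ℝ)).mpr (Nat.cast_le.mpr (by omega : n ≤ k)))]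
    have hseq : ∀ U : Opens ℝ, Monotone fun n : ℕ => g n (U ⊓ Oiio ((n : ℝ) + 1)) := fun U =>
      monotone_nat_of_le_succ fun n => by
        rw [agree n (n + 1) (Nat.le_succ n) _ inf_coe_subset]
        exact OrderHomClass.mono (g (n + 1))
          (inf_le_inf_left U (Oiio_mono (by push_cast; linarith)))
    set G : Opens ℝ → L := fun U => ⨆ n : ℕ, g n (U ⊓ Oiio ((n : ℝ) + 1)) with hG
    have Gmono : Monotone G := fun U V hUV =>
      iSup_mono fun n => OrderHomClass.mono (g n) (inf_le_inf_right _ hUV)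
    have Gtop : G ⊤ = ⊤ := by
      simp only [hG, top_inf_eq]; exact h2
    have Ginf : ∀ U V : Opens ℝ, G (U ⊓ V) = G U ⊓ G V := by
      intro U V
      apply le_antisymm
      · exact le_inf (Gmono inf_le_left) (Gmono inf_le_right)
      · rw [hG]
        simp only []
        rw [iSup_inf_eq]
        refine iSup_le fun m => ?_
        rw [inf_iSup_eq]
        refine iSup_le fun n => ?_
        refine le_trans (inf_le_inf (hseq U (le_max_left m n)) (hseq V (le_max_right m n))) ?_
        rw [← map_inf]
        rw [inf_inf_inf_comm, inf_idem]
        exact le_iSup (fun k : ℕ => g k ((U ⊓ V) ⊓ Oiio ((k : ℝ) + 1))) (max m n)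
    have GsSup : ∀ S : Set (Opens ℝ), G (sSup S) = sSup (G '' S) := by
      intro S
      rw [sSup_image]
      simp only [hG]
      have : ∀ n : ℕ, g n (sSup S ⊓ Oiio ((n : ℝ) + 1)) =
          ⨆ s ∈ S, g n (s ⊓ Oiio ((n : ℝ) + 1)) := by
        intro n
        rw [sSup_inf_eq]
        rw [map_iSup]
        exact iSup_congr fun s => map_iSup _ _
      simp only [this]
      rw [iSup_comm]
      exact iSup_congr fun s => iSup_comm
    let g₀ : FrameHom (Opens ℝ) L := ⟨⟨⟨G, Ginf⟩, Gtop⟩, GsSup⟩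
    have g₀apply : ∀ U, g₀ U = G U := fun _ => rfl
    have hcast : ∀ m k : ℕ, m ≤ k → (m : ℝ) + 1 ≤ (k : ℝ) + 1 := fun m k h =>
      (add_le_add_iff_right (1 : ℝ)).mpr (Nat.cast_le.mpr h)
    have hrel : ∀ n : ℕ, ∀ U : Opens ℝ, g n U = wedgeMap (⇑g₀) ((n : ℝ) + 1) U := by
      intro n U
      rw [wedge_eq _ (OrderHomClass.mono g₀), g₀apply]
      set P := Opens.comap (minC ((n : ℝ) + 1)) U with hP
      apply le_antisymm
      · calc g n U = g n U ⊓ ⊤ := (inf_top_eq _).symm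
          _ = g n U ⊓ ⨆ m : ℕ, g m (Oiio ((m : ℝ) + 1)) := by rw [h2]
          _ = ⨆ m : ℕ, g n U ⊓ g m (Oiio ((m : ℝ) + 1)) := inf_iSup_eq _ _
          _ ≤ G P := ?_
        refine iSup_le fun m => ?_
        rw [iter n (m + n + 1) (by omega) U,
          agree m (m + n + 1) (by omega) _ Oiio_subset, ← map_inf]
        refine le_trans (OrderHomClass.mono (g (m + n + 1))
          (inf_le_inf_left P (Oiio_mono (hcast m (m + n + 1) (by omega))))) ?_
        exact le_iSup (fun k : ℕ => g k (P ⊓ Oiio ((k : ℝ) + 1))) (m + n + 1)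
      · refine iSup_le fun m => ?_
        rw [agree m (m + n + 1) (by omega) _ inf_coe_subset,
          iter n (m + n + 1) (by omega) U]
        exact OrderHomClass.mono (g (m + n + 1)) inf_le_left
    refine ⟨g₀, ⟨?_, hrel⟩, ?_⟩
    · rw [g₀apply]
      have hint : ∀ n : ℕ, Oiio (0 : ℝ) ⊓ Oiio ((n : ℝ) + 1) = Oiio 0 := fun n =>
        inf_eq_left.mpr (Oiio_mono (by positivity))
      simp only [hG, hint, hpos, iSup_bot]
    · rintro g₀' ⟨h0', hrel'⟩
      refine DFunLike.ext _ _ fun U => ?_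
      have step : ∀ n : ℕ, g₀' (U ⊓ Oiio ((n : ℝ) + 1)) = g n (U ⊓ Oiio ((n : ℝ) + 1)) :=
        fun n => by
          rw [hrel' n, wedge_eq _ (OrderHomClass.mono g₀'), comap_minC_of_le inf_coe_subset]
      calc g₀' U = g₀' (⨆ n : ℕ, U ⊓ Oiio ((n : ℝ) + 1)) := by rw [iSup_inter]
        _ = ⨆ n : ℕ, g₀' (U ⊓ Oiio ((n : ℝ) + 1)) := map_iSup _ _
        _ = g₀ U := iSup_congr step
  · rintro ⟨g₀, ⟨h0, hrel⟩, -⟩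
    have hg : ∀ n : ℕ, ∀ U : Opens ℝ,
        g n U = g₀ (Opens.comap (minC ((n : ℝ) + 1)) U) := fun n U => by
      rw [hrel n U, wedge_eq _ (OrderHomClass.mono g₀)]
    constructor
    · intro n U
      rw [wedge_eq _ (OrderHomClass.mono (g (n + 1))), hg n U, hg (n + 1)]
      rw [comap_minC_minC (by push_cast; linarith)]
    · have htop : (⨆ n : ℕ, Oiio ((n : ℝ) + 1)) = (⊤ : Opens ℝ) := by
        have := iSup_inter (⊤ : Opens ℝ)
        simpa only [top_inf_eq] using this
      calc ⨆ n : ℕ, g n (Oiio ((n : ℝ) + 1))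
          = ⨆ n : ℕ, g₀ (Oiio ((n : ℝ) + 1)) :=
            iSup_congr fun n => by rw [hg, comap_minC_of_le Oiio_subset]
        _ = g₀ (⨆ n : ℕ, Oiio ((n : ℝ) + 1)) := (map_iSup _ _).symm
        _ = ⊤ := by rw [htop, map_top]
end

section
/- If (f_n) is a good sequence in a trunc (each f_n is in the range of the truncation, f_n = (f_n + f_{n+1})̄ for all n, and f_n decreases pointwise to 0), then the partial sums g_m := Σ_{n=1}^m f_n satisfy g_m = g_{m+1} ∧ m for all m; in particular, the map from good sequences to truncation sequences via partial sums composed with the map from truncation sequences to good sequences via differences is the identity. -/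
open TopologicalSpace

/-- The addition operation on frame-valued functions on `𝒪ℝ`, induced by the
continuous map `(x, y) ↦ x + y`:
`(f + g)(V) = ⋁_{U₁ + U₂ ⊆ V} (f(U₁) ⊓ g(U₂))`. -/
noncomputable def plusMap {L : Type*} [Order.Frame L] (f g : Opens ℝ → L)
    (V : Opens ℝ) : L :=
  ⨆ U₁ : Opens ℝ, ⨆ U₂ : Opens ℝ,
    ⨆ _ : ∀ x ∈ (U₁ : Set ℝ), ∀ y ∈ (U₂ : Set ℝ), x + y ∈ (V : Set ℝ),
      f U₁ ⊓ g U₂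

open Classical in
/-- The zero element of `R₀L`, viewed as a frame-valued function on `𝒪ℝ`. -/
noncomputable def zeroMap {L : Type*} [Order.Frame L] (V : Opens ℝ) : L :=
  if (0 : ℝ) ∈ (V : Set ℝ) then ⊤ else ⊥

/-- Finite partial sums `f 0 + ⋯ + f (m-1)` of a sequence of frame-valued
functions on `𝒪ℝ`. -/
noncomputable def sumMap {L : Type*} [Order.Frame L] (f : ℕ → Opens ℝ → L) :
    ℕ → Opens ℝ → L
  | 0 => zeroMap
  | m + 1 => plusMap (sumMap f m) (f m)

section basics
variable {L : Type*} [Order.Frame L] (f : FrameHom (Opens ℝ) L)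

lemma fmono {U V : Opens ℝ} (h : (U : Set ℝ) ⊆ (V : Set ℝ)) : f U ≤ f V :=
  OrderHomClass.mono f h

lemma fcover {U A B : Opens ℝ} (h : (U : Set ℝ) ⊆ (A : Set ℝ) ∪ (B : Set ℝ)) :
    f U ≤ f A ⊔ f B := by
  have : f U ≤ f (A ⊔ B) := fmono f (by simpa using h)
  simpa [map_sup] using this

lemma Oioo_bot {p q : ℝ} (h : ¬ p < q) : Oioo p q = ⊥ := by
  apply Opens.ext
  simp [Oioo, Set.Ioo_eq_empty h]

lemma fbasis (U : Opens ℝ) :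
    f U = ⨆ p : ℝ, ⨆ q : ℝ, ⨆ _ : Set.Ioo p q ⊆ (U : Set ℝ), f (Oioo p q) := by
  have hU : U = ⨆ p : ℝ, ⨆ q : ℝ, ⨆ _ : Set.Ioo p q ⊆ (U : Set ℝ), Oioo p q := by
    apply Opens.ext
    ext x
    simp only [Opens.coe_iSup, Set.mem_iUnion]
    constructor
    · intro hx
      obtain ⟨ε, hε, hb⟩ := Metric.isOpen_iff.1 U.2 x hx
      refine ⟨x - ε, x + ε, ?_, ?_⟩
      · intro y hy
        apply hb
        rw [Real.ball_eq_Ioo] at hb ⊢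
        exact hy
      · simp only [Oioo, Opens.coe_mk, Set.mem_Ioo]
        constructor <;> linarith
    · rintro ⟨p, q, h, hx⟩
      exact h hx
  nth_rewrite 1 [hU]
  simp only [map_iSup]

lemma fIoi0 : f (Oioi 0) = ⨆ i : ℕ, f (Oioi (1 / (i + 1))) := by
  have : Oioi 0 = ⨆ i : ℕ, Oioi (1 / ((i : ℝ) + 1)) := by
    apply Opens.ext
    ext x
    simp only [Opens.coe_iSup, Set.mem_iUnion, Oioi, Set.mem_Ioi, Opens.coe_mk]
    constructor
    · intro hx
      obtain ⟨n, hn⟩ := exists_nat_one_div_lt hx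
      exact ⟨n, hn⟩
    · rintro ⟨i, hi⟩
      have : (0:ℝ) < 1 / ((i:ℝ) + 1) := by positivity
      linarith
  rw [this, map_iSup]

end basics


section plus
variable {L : Type*} [Order.Frame L]

lemma plusLe (g h : Opens ℝ → L) {U₁ U₂ V : Opens ℝ}
    (hc : ∀ x ∈ (U₁ : Set ℝ), ∀ y ∈ (U₂ : Set ℝ), x + y ∈ (V : Set ℝ)) :
    g U₁ ⊓ h U₂ ≤ plusMap g h V := by
  refine le_trans ?_ (le_iSup _ U₁)
  refine le_trans ?_ (le_iSup _ U₂)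
  exact le_iSup_of_le hc le_rfl

lemma plusMono (g h : Opens ℝ → L) {V V' : Opens ℝ}
    (hV : (V : Set ℝ) ⊆ (V' : Set ℝ)) : plusMap g h V ≤ plusMap g h V' := by
  refine iSup_le fun U₁ => iSup_le fun U₂ => iSup_le fun hc => ?_
  exact plusLe g h fun x hx y hy => hV (hc x hx y hy)

lemma plusLeOfLe (g h : Opens ℝ → L) {V : Opens ℝ} {c : L}
    (hb : ∀ U₁ U₂ : Opens ℝ,
      (∀ x ∈ (U₁ : Set ℝ), ∀ y ∈ (U₂ : Set ℝ), x + y ∈ (V : Set ℝ)) →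
      g U₁ ⊓ h U₂ ≤ c) : plusMap g h V ≤ c :=
  iSup_le fun U₁ => iSup_le fun U₂ => iSup_le fun hc => hb U₁ U₂ hc

end plus

section seq
variable {L : Type*} [Order.Frame L] (f : ℕ → FrameHom (Opens ℝ) L)

lemma fIoi1bot (htrunc : ∀ U : Opens ℝ, f 0 U = truncMap (⇑(f 0)) U) :
    f 0 (Oioi 1) = ⊥ := by
  rw [htrunc (Oioi 1)]
  refine le_bot_iff.1 (iSup_le fun U => iSup_le fun hc => ?_)
  have hU : U = ⊥ := by
    apply Opens.ext
    rw [Opens.coe_bot]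
    ext x
    simp only [Set.mem_empty_iff_false, iff_false]
    intro hx
    have := hc ⟨x, hx, rfl⟩
    simp only [Oioi, Opens.coe_mk, Set.mem_Ioi] at this
    have : min x 1 ≤ 1 := min_le_right _ _
    linarith [hc ⟨x, hx, rfl⟩, (show (1:ℝ) < min x 1 from hc ⟨x, hx, rfl⟩)]
  rw [hU, map_bot]

lemma fIoiNegTop (hpos : f 0 (Oiio 0) = ⊥) {r : ℝ} (hr : r < 0) :
    f 0 (Oioi r) = ⊤ := by
  refine top_le_iff.1 ?_
  have h1 : (⊤ : L) = f 0 ⊤ := (map_top _).symm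
  rw [h1]
  have := fcover (f 0) (U := ⊤) (A := Oiio 0) (B := Oioi r) ?_
  · rw [hpos] at this; simpa using this
  · intro x _
    simp only [Oiio, Oioi, Opens.coe_mk, Set.mem_union, Set.mem_Iio, Set.mem_Ioi]
    rcases lt_or_ge x 0 with h | h
    · exact Or.inl h
    · exact Or.inr (lt_of_lt_of_le hr h)

lemma fgoodIoi
    (hgood : ∀ U : Opens ℝ, f 0 U = truncMap (plusMap (⇑(f 0)) (⇑(f 1))) U)
    {s : ℝ} (hs : s < 1) :
    f 0 (Oioi s) = plusMap (⇑(f 0)) (⇑(f 1)) (Oioi s) := by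
  rw [hgood (Oioi s)]
  apply le_antisymm
  · refine iSup_le fun U => iSup_le fun hc => ?_
    apply plusMono (V := U) (V' := Oioi s)
    intro x hx
    have := hc ⟨x, hx, rfl⟩
    simp only [Oioi, Opens.coe_mk, Set.mem_Ioi] at this ⊢
    exact lt_of_lt_of_le this (min_le_left _ _)
  · refine le_trans ?_ (le_iSup _ (Oioi s))
    refine le_iSup_of_le ?_ le_rfl
    rintro y ⟨x, hx, rfl⟩
    simp only [Oioi, Opens.coe_mk, Set.mem_Ioi] at hx ⊢
    exact lt_min hx hs

end seq

section key
variable {L : Type*} [Order.Frame L] (f : ℕ → FrameHom (Opens ℝ) L)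

lemma key_step
    (hgood : ∀ U : Opens ℝ, f 0 U = truncMap (plusMap (⇑(f 0)) (⇑(f 1))) U)
    {r δ s : ℝ} (hs : s < 1) (hsum : s ≤ r + δ) :
    f 0 (Oioi r) ⊓ f 1 (Oioi δ) ≤ f 0 (Oioi s) := by
  rw [fgoodIoi f hgood hs]
  apply plusLe
  intro x hx y hy
  simp only [Oioi, Opens.coe_mk, Set.mem_Ioi] at hx hy ⊢
  linarith

lemma key1
    (hgood : ∀ U : Opens ℝ, f 0 U = truncMap (plusMap (⇑(f 0)) (⇑(f 1))) U)
    (hdec01 : ∀ r : ℝ, f 1 (Oioi r) ≤ f 0 (Oioi r))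
    {δ r : ℝ} (hδ : 0 < δ) (hr : r < 1) :
    f 1 (Oioi δ) ≤ f 0 (Oioi r) := by
  obtain ⟨k, hk⟩ := exists_nat_ge (r / δ)
  have hk' : r ≤ δ * k := by
    rw [div_le_iff₀ hδ] at hk; linarith [hk]
  clear hk
  induction k generalizing r with
  | zero =>
      have : r ≤ δ := by simpa using hk'.trans (by simp [hδ.le])
      exact (hdec01 δ).trans (fmono _ (Set.Ioi_subset_Ioi this))
  | succ k ih =>
      rcases le_or_gt r δ with h | h
      · exact (hdec01 δ).trans (fmono _ (Set.Ioi_subset_Ioi h))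
      · have h1 : r - δ ≤ δ * k := by push_cast at hk' ⊢; linarith
        have h2 : r - δ < 1 := by linarith
        have := ih h2 h1
        calc f 1 (Oioi δ) ≤ f 0 (Oioi (r - δ)) ⊓ f 1 (Oioi δ) :=
              le_inf this le_rfl
          _ ≤ f 0 (Oioi r) := key_step f hgood hr (by linarith)

end key

lemma iInf_castSucc {L : Type*} [CompleteLattice L] {m : ℕ} (g : Fin (m + 1) → L) :
    (⨅ i, g i) = (⨅ i : Fin m, g i.castSucc) ⊓ g (Fin.last m) := by
  apply le_antisymm
  · exact le_inf (le_iInf fun i => iInf_le _ _) (iInf_le _ _)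
  · refine le_iInf fun i => ?_
    induction i using Fin.lastCases with
    | last => exact inf_le_right
    | cast j => exact inf_le_left.trans (iInf_le _ j)

section sums
variable {L : Type*} [Order.Frame L] (f : ℕ → FrameHom (Opens ℝ) L)

lemma sumLower : ∀ (m : ℕ) (V : Opens ℝ) (η : ℝ) (a b : Fin m → ℝ), 0 < η →
    Set.Ioo ((∑ i, a i) - η) ((∑ i, b i) + η) ⊆ (V : Set ℝ) →
    (⨅ i : Fin m, f i (Oioo (a i) (b i))) ≤ sumMap (fun n => ⇑(f n)) m V := by
  intro m
  induction m with
  | zero =>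
      intro V η a b hη hV
      have h0 : (0 : ℝ) ∈ (V : Set ℝ) := by
        apply hV; simp only [Finset.univ_eq_empty, Finset.sum_empty, Set.mem_Ioo]
        constructor <;> linarith
      show _ ≤ zeroMap V
      rw [zeroMap, if_pos h0]
      exact le_top
  | succ m ih =>
      intro V η a b hη hV
      set a' : Fin m → ℝ := fun i => a i.castSucc with ha'
      set b' : Fin m → ℝ := fun i => b i.castSucc with hb'
      set A : Opens ℝ := Oioo ((∑ i, a' i) - η) ((∑ i, b' i) + η) with hA
      rw [iInf_castSucc]
      show _ ≤ plusMap (sumMap (fun n => ⇑(f n)) m) (⇑(f m)) V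
      have h1 : (⨅ i : Fin m, f (i.castSucc : ℕ) (Oioo (a i.castSucc) (b i.castSucc)))
          ≤ sumMap (fun n => ⇑(f n)) m A := by
        have := ih A η a' b' hη (by intro z hz; exact hz)
        refine le_trans (le_of_eq ?_) this
        apply iInf_congr
        intro i
        simp [Fin.coe_castSucc, ha', hb']
      set B : Opens ℝ := Oioo (a (Fin.last m)) (b (Fin.last m)) with hB
      have h2 : (f ((Fin.last m : Fin (m+1)) : ℕ)) (Oioo (a (Fin.last m)) (b (Fin.last m)))
          ≤ (f m) B := by
        rw [hB, Fin.val_last]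
      refine le_trans (inf_le_inf h1 h2)
        (plusLe (sumMap (fun n => ⇑(f n)) m) (⇑(f m)) (U₁ := A) (U₂ := B) ?_)
      intro x hx y hy
      apply hV
      simp only [hA, hB, Oioo, Opens.coe_mk, Set.mem_Ioo] at hx hy ⊢
      rw [Fin.sum_univ_castSucc (f := a), Fin.sum_univ_castSucc (f := b)]
      simp only [ha', hb'] at hx
      obtain ⟨hx1, hx2⟩ := hx
      obtain ⟨hy1, hy2⟩ := hy
      constructor <;> linarith

end sums

lemma Ioo_add_decomp {A B p q z : ℝ} (hAB : A < B) (hpq : p < q)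
    (hz : z ∈ Set.Ioo (A + p) (B + q)) :
    ∃ u ∈ Set.Ioo A B, ∃ y ∈ Set.Ioo p q, u + y = z := by
  obtain ⟨hz1, hz2⟩ := hz
  have h1 : max A (z - q) < min B (z - p) := by
    apply max_lt <;> apply lt_min <;> linarith
  refine ⟨(max A (z - q) + min B (z - p)) / 2, ⟨?_, ?_⟩, z - (max A (z - q) + min B (z - p)) / 2, ⟨?_, ?_⟩, by ring⟩
  · have := le_max_left A (z - q); linarith
  · have := min_le_left B (z - p); linarith
  · have := min_le_right B (z - p); linarith
  · have := le_max_right A (z - q); linarith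

section sums2
variable {L : Type*} [Order.Frame L] (f : ℕ → FrameHom (Opens ℝ) L)

lemma sumUpper : ∀ (m : ℕ) (V : Opens ℝ) (c X : L),
    (∀ η : ℝ, 0 < η → ∀ a b : Fin m → ℝ, (∀ i, a i < b i) →
      Set.Ioo ((∑ i, a i) - η) ((∑ i, b i) + η) ⊆ (V : Set ℝ) →
      (⨅ i : Fin m, f i (Oioo (a i) (b i))) ⊓ c ≤ X) →
    sumMap (fun n => ⇑(f n)) m V ⊓ c ≤ X := by
  intro m
  induction m with
  | zero =>
      intro V c X h
      show zeroMap V ⊓ c ≤ X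
      rw [zeroMap]
      split_ifs with h0
      · obtain ⟨η, hη, hball⟩ := Metric.isOpen_iff.1 V.2 0 h0
        have := h η hη (Fin.elim0) (Fin.elim0) (fun i => i.elim0) ?_
        · simpa using this
        · intro z hz
          apply hball
          rw [Real.ball_eq_Ioo]
          simpa using hz
      · simp
  | succ m ih =>
      intro V c X h
      show plusMap (sumMap (fun n => ⇑(f n)) m) (⇑(f m)) V ⊓ c ≤ X
      rw [plusMap]
      simp only [iSup_inf_eq]
      refine iSup_le fun U₁ => iSup_le fun U₂ => iSup_le fun hc => ?_
      rw [fbasis (f m) U₂]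
      simp only [inf_iSup_eq, iSup_inf_eq]
      refine iSup_le fun p => iSup_le fun q => iSup_le fun hpqU => ?_
      by_cases hpq : p < q
      · have hgoal := ih U₁ (f m (Oioo p q) ⊓ c) X ?_
        · refine le_trans (le_of_eq (by rw [inf_assoc])) hgoal
        · intro η hη a b hab hsub
          have hab' : ∀ i : Fin (m + 1), (Fin.snoc a p : Fin (m+1) → ℝ) i < (Fin.snoc b q : Fin (m+1) → ℝ) i := by
            intro i
            induction i using Fin.lastCases with
            | last => simpa using hpq
            | cast j => simpa using hab j
          have hAB : (∑ i, a i) - η < (∑ i, b i) + η := by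
            have : (∑ i, a i) ≤ ∑ i, b i :=
              Finset.sum_le_sum fun i _ => (hab i).le
            linarith
          have hmain := h η hη (Fin.snoc a p) (Fin.snoc b q) hab' ?_
          · refine le_trans (le_of_eq ?_) hmain
            rw [iInf_castSucc, inf_assoc]
            congr 1
            · apply iInf_congr; intro i
              simp [Fin.snoc_castSucc]
            · congr 1
              simp [Fin.snoc_last, Fin.val_last]
          · intro z hz
            rw [Fin.sum_univ_castSucc (f := Fin.snoc a p),
              Fin.sum_univ_castSucc (f := Fin.snoc b q)] at hz
            simp only [Fin.snoc_castSucc, Fin.snoc_last, Set.mem_Ioo] at hz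
            obtain ⟨u, hu, y, hy, huy⟩ := Ioo_add_decomp hAB hpq
              (z := z) ⟨by linarith [hz.1], by linarith [hz.2]⟩
            rw [← huy]
            exact hc u (hsub hu) y (hpqU hy)
      · rw [Oioo_bot hpq, map_bot]
        simp

end sums2

section single
variable {L : Type*} [Order.Frame L] (g : FrameHom (Opens ℝ) L)

lemma fbothigh (h1 : g (Oioi 1) = ⊥) {p q : ℝ} (hp : 1 ≤ p) : g (Oioo p q) = ⊥ := by
  refine le_bot_iff.1 ?_
  rw [← h1]
  apply fmono
  intro x hx
  simp only [Oioo, Oioi, Opens.coe_mk, Set.mem_Ioo, Set.mem_Ioi] at hx ⊢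
  linarith [hx.1]

lemma fbotlow (h0 : g (Oiio 0) = ⊥) {p q : ℝ} (hq : q ≤ 0) : g (Oioo p q) = ⊥ := by
  refine le_bot_iff.1 ?_
  rw [← h0]
  apply fmono
  intro x hx
  simp only [Oioo, Oiio, Opens.coe_mk, Set.mem_Ioo, Set.mem_Iio] at hx ⊢
  linarith [hx.2]

lemma fcuthigh (h1 : g (Oioi 1) = ⊥) (p q γ : ℝ) (hγ : 0 < γ) :
    g (Oioo p q) ≤ g (Oioo p (min q (1 + γ))) := by
  have := fcover g (U := Oioo p q) (A := Oioo p (min q (1 + γ))) (B := Oioi 1) ?_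
  · rwa [h1, sup_bot_eq] at this
  · intro x hx
    simp only [Oioo, Oioi, Opens.coe_mk, Set.mem_Ioo, Set.mem_Ioi, Set.mem_union] at hx ⊢
    rcases le_or_gt x 1 with h | h
    · exact Or.inl ⟨hx.1, lt_min hx.2 (by linarith)⟩
    · exact Or.inr h

lemma fcutlow (h0 : g (Oiio 0) = ⊥) (p q δ : ℝ) (hδ : 0 < δ) :
    g (Oioo p q) ≤ g (Oioo (max p (-δ)) q) := by
  have := fcover g (U := Oioo p q) (A := Oioo (max p (-δ)) q) (B := Oiio 0) ?_
  · rwa [h0, sup_bot_eq] at this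
  · intro x hx
    simp only [Oioo, Oiio, Opens.coe_mk, Set.mem_Ioo, Set.mem_Iio, Set.mem_union] at hx ⊢
    rcases lt_or_ge (-δ) x with h | h
    · exact Or.inl ⟨sup_lt_iff.2 ⟨hx.1, h⟩, hx.2⟩
    · exact Or.inr (by linarith)

lemma fmeetIoi (p q r : ℝ) : g (Oioo p q) ⊓ g (Oioi r) = g (Oioo (max p r) q) := by
  rw [← map_inf]
  congr 1
  apply Opens.ext
  rw [Opens.coe_inf]
  show Set.Ioo p q ∩ Set.Ioi r = Set.Ioo (max p r) q
  exact Set.Ioo_inter_Ioi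

end single

section keyall
variable {L : Type*} [Order.Frame L] (f : ℕ → FrameHom (Opens ℝ) L)

lemma keyAll
    (hgood : ∀ n, ∀ U : Opens ℝ,
      f n U = truncMap (plusMap (⇑(f n)) (⇑(f (n + 1)))) U)
    (hdec : ∀ n (r : ℝ), f (n + 1) (Oioi r) ≤ f n (Oioi r)) :
    ∀ j k : ℕ, j < k → ∀ r : ℝ, r < 1 → f k (Oioi 0) ≤ f j (Oioi r) := by
  have hchain : ∀ (j k : ℕ), j ≤ k → ∀ r : ℝ, f k (Oioi r) ≤ f j (Oioi r) := by
    intro j k hjk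
    induction k with
    | zero =>
        intro r
        rcases Nat.le_zero.1 hjk
        exact le_rfl
    | succ k ih =>
        intro r
        rcases eq_or_lt_of_le hjk with h | h
        · rw [h]
        · exact (hdec k r).trans (ih (Nat.lt_succ_iff.1 h) r)
  intro j k hjk r hr
  rw [fIoi0 (f k)]
  refine iSup_le fun i => ?_
  have hδ : (0:ℝ) < 1 / ((i:ℝ) + 1) := by positivity
  have h1 : f k (Oioi (1 / ((i:ℝ) + 1))) ≤ f (j + 1) (Oioi (1 / ((i:ℝ) + 1))) :=
    hchain (j + 1) k hjk _
  refine h1.trans ?_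
  exact key1 (fun t => f (j + t)) (hgood j) (fun r' => hdec j r') hδ hr

end keyall

section main
variable {L : Type*} [Order.Frame L] (f : ℕ → FrameHom (Opens ℝ) L)

lemma part1 (hpos : ∀ n, f n (Oiio 0) = ⊥) (hIoi1 : ∀ n, f n (Oioi 1) = ⊥)
    (hkey : ∀ j k : ℕ, j < k → ∀ r : ℝ, r < 1 → f k (Oioi 0) ≤ f j (Oioi r))
    (m : ℕ) (V : Opens ℝ) :
    sumMap (fun n => ⇑(f n)) m V
      ≤ wedgeMap (sumMap (fun n => ⇑(f n)) (m + 1)) (m : ℝ) V := by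
  set X := wedgeMap (sumMap (fun n => ⇑(f n)) (m + 1)) (m : ℝ) V with hX
  have hm0 : (0:ℝ) ≤ (m:ℝ) := Nat.cast_nonneg m
  have wle : ∀ U : Opens ℝ, (∀ x ∈ (U : Set ℝ), min x (m:ℝ) ∈ (V : Set ℝ)) →
      sumMap (fun n => ⇑(f n)) (m + 1) U ≤ X := by
    intro U h
    rw [hX, wedgeMap]
    refine le_trans ?_ (le_iSup _ U)
    refine le_iSup_of_le ?_ le_rfl
    rintro _ ⟨x, hx, rfl⟩
    exact h x hx
  have hupper := sumUpper f m V ⊤ X ?_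
  · simpa using hupper
  intro η hη a b hab hsub
  rw [inf_top_eq]
  by_cases ha1 : ∀ i : Fin m, a i < 1
  case neg =>
    push_neg at ha1; obtain ⟨i0, hi0⟩ := ha1
    refine le_trans (iInf_le _ i0) ?_
    rw [fbothigh (f i0) (hIoi1 i0) hi0]
    exact bot_le
  have hSa : (∑ i, a i) ≤ (m:ℝ) := by
    calc (∑ i, a i) ≤ ∑ _i : Fin m, (1:ℝ) :=
          Finset.sum_le_sum fun i _ => (ha1 i).le
      _ = m := by simp
  have hAm : (∑ i, a i) - η < (m:ℝ) := by linarith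
  set T := ⨅ i : Fin m, f i (Oioo (a i) (b i)) with hT
  have htop : (⊤:L) ≤ f m (Oioo (-(η/2)) (η/2)) ⊔ ⨆ i : ℕ, f m (Oioi (1/((i:ℝ)+1))) := by
    have t1 : (⊤:L) = f m ⊤ := (map_top (f m)).symm
    rw [t1]
    have t2 := fcover (f m) (U := ⊤) (A := Oiio (η/2)) (B := Oioi 0) ?_
    · refine t2.trans (sup_le_sup ?_ ?_)
      · have t3 := fcover (f m) (U := Oiio (η/2)) (A := Oioo (-(η/2)) (η/2))
          (B := Oiio 0) ?_
        · rwa [hpos m, sup_bot_eq] at t3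
        · intro x hx
          simp only [Oiio, Oioo, Opens.coe_mk, Set.mem_Iio, Set.mem_Ioo,
            Set.mem_union] at hx ⊢
          rcases lt_or_ge x 0 with h | h
          · exact Or.inr h
          · exact Or.inl ⟨by linarith, hx⟩
      · rw [fIoi0 (f m)]
    · intro x _
      simp only [Oiio, Oioi, Opens.coe_mk, Set.mem_union, Set.mem_Iio, Set.mem_Ioi]
      rcases lt_or_ge x 0 with h | h
      · exact Or.inl (by linarith)
      · rcases lt_or_ge 0 x with h' | h'
        · exact Or.inr h'
        · exact Or.inl (by linarith)
  calc T = T ⊓ ⊤ := (inf_top_eq T).symm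
    _ ≤ T ⊓ (f m (Oioo (-(η/2)) (η/2)) ⊔ ⨆ i : ℕ, f m (Oioi (1/((i:ℝ)+1)))) :=
        inf_le_inf_left _ htop
    _ = (T ⊓ f m (Oioo (-(η/2)) (η/2))) ⊔ ⨆ i : ℕ, T ⊓ f m (Oioi (1/((i:ℝ)+1))) := by
        rw [inf_sup_left, inf_iSup_eq]
    _ ≤ X := ?_
  refine sup_le ?_ (iSup_le fun i => ?_)
  · -- case A
    have hcond : ∀ z ∈ (Oioo ((∑ i, a i) - η) ((∑ i, b i) + η) : Set ℝ),
        min z (m:ℝ) ∈ (V : Set ℝ) := by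
      intro z hz
      simp only [Oioo, Opens.coe_mk, Set.mem_Ioo] at hz
      rcases le_total z (m:ℝ) with h | h
      · rw [min_eq_left h]; exact hsub ⟨hz.1, hz.2⟩
      · rw [min_eq_right h]; exact hsub ⟨hAm, lt_of_le_of_lt h hz.2⟩
    refine le_trans ?_ (wle _ hcond)
    show _ ≤ plusMap (sumMap (fun n => ⇑(f n)) m) (⇑(f m)) _
    refine le_trans (inf_le_inf
      (sumLower f m (Oioo ((∑ i, a i) - η/2) ((∑ i, b i) + η/2)) (η/2) a b
        (by positivity) (fun z hz => hz)) le_rfl) (plusLe _ _ ?_)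
    intro x hx y hy
    simp only [Oioo, Opens.coe_mk, Set.mem_Ioo] at hx hy ⊢
    obtain ⟨h1, h2⟩ := hx; obtain ⟨h3, h4⟩ := hy
    constructor <;> linarith
  · -- case B
    set δ : ℝ := 1/((i:ℝ)+1) with hδdef
    have hδ : (0:ℝ) < δ := by positivity
    set r1 : ℝ := 1 - η/(2*((m:ℝ)+1)) with hr1def
    have hr1 : r1 < 1 := by
      rw [hr1def]; have : (0:ℝ) < η/(2*((m:ℝ)+1)) := by positivity
      linarith
    have hfm0 : f m (Oioi δ) ≤ f m (Oioi 0) :=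
      fmono _ (Set.Ioi_subset_Ioi hδ.le)
    by_cases hball : ∀ j : Fin m, max (a j) r1 < b j
    case neg =>
      push_neg at hball; obtain ⟨j0, hj0⟩ := hball
      have hb : T ⊓ f m (Oioi δ) ≤ f j0 (Oioo (a j0) (b j0)) ⊓ f j0 (Oioi r1) :=
        le_inf (inf_le_left.trans (iInf_le _ j0))
          (inf_le_right.trans (hfm0.trans (hkey j0 m j0.2 r1 hr1)))
      rw [fmeetIoi, Oioo_bot (not_lt.2 hj0)] at hb
      rw [map_bot] at hb
      exact hb.trans bot_le
    have hmr1 : (m:ℝ) * r1 ≤ ∑ j, b j := by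
      have h1 : (m:ℝ) * r1 = ∑ _j : Fin m, r1 := by
        rw [Finset.sum_const, Finset.card_univ, Fintype.card_fin, nsmul_eq_mul]
      rw [h1]
      exact Finset.sum_le_sum fun j _ => ((le_max_right _ _).trans (hball j).le)
    have hmr1' : (m:ℝ) - η/2 ≤ (m:ℝ) * r1 := by
      rw [hr1def]
      have hd : (0:ℝ) < 2*((m:ℝ)+1) := by positivity
      have : (m:ℝ) * (η/(2*((m:ℝ)+1))) ≤ η/2 := by
        rw [mul_div_assoc'] at *
        rw [div_le_div_iff₀ hd (by norm_num : (0:ℝ) < 2)]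
        nlinarith
      nlinarith
    have hmV : (m:ℝ) ∈ (V : Set ℝ) := by
      apply hsub
      refine ⟨hAm, ?_⟩
      have hcomb : (m:ℝ) - η/2 ≤ ∑ j, b j := le_trans hmr1' hmr1
      linarith [hcomb]
    obtain ⟨κ, hκ, hballκ⟩ := Metric.isOpen_iff.1 V.2 _ hmV
    rw [Real.ball_eq_Ioo] at hballκ
    set γ : ℝ := κ/(2*((m:ℝ)+1)) with hγdef
    have hγ : 0 < γ := by positivity
    set r2 : ℝ := 1 - γ with hr2def
    have hr2 : r2 < 1 := by linarith
    have hstep : T ⊓ f m (Oioi δ) ≤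
        (⨅ j : Fin m, f j (Oioo (max (a j) r2) (min (b j) (1+γ)))) ⊓ f m (Oioi δ) := by
      refine le_inf (le_iInf fun j => ?_) inf_le_right
      have h1 : T ⊓ f m (Oioi δ) ≤ f j (Oioo (a j) (b j)) ⊓ f j (Oioi r2) :=
        le_inf (inf_le_left.trans (iInf_le _ j))
          (inf_le_right.trans (hfm0.trans (hkey j m j.2 r2 hr2)))
      rw [fmeetIoi] at h1
      exact h1.trans (fcuthigh (f j) (hIoi1 j) _ _ γ hγ)
    have hsl := sumLower f m
      (Oioo ((∑ j, max (a j) r2) - κ/4) ((∑ j, min (b j) (1+γ)) + κ/4)) (κ/4)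
      (fun j => max (a j) r2) (fun j => min (b j) (1+γ)) (by positivity)
      (fun z hz => hz)
    have hlow : (m:ℝ) - κ/2 ≤ ∑ j, max (a j) r2 := by
      have h1 : (m:ℝ) * r2 ≤ ∑ j : Fin m, max (a j) r2 := by
        have h2 : (m:ℝ) * r2 = ∑ _j : Fin m, r2 := by
          rw [Finset.sum_const, Finset.card_univ, Fintype.card_fin, nsmul_eq_mul]
        rw [h2]
        exact Finset.sum_le_sum fun j _ => le_max_right _ _
      have h3 : (m:ℝ) * γ ≤ κ/2 := by
        rw [hγdef, mul_div_assoc']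
        rw [div_le_div_iff₀ (by positivity : (0:ℝ) < 2*((m:ℝ)+1)) (by norm_num : (0:ℝ) < 2)]
        nlinarith
      have : (m:ℝ) * r2 = m - m * γ := by rw [hr2def]; ring
      nlinarith
    have hhigh : (∑ j, min (b j) (1+γ)) ≤ (m:ℝ) + κ/2 := by
      have h1 : (∑ j : Fin m, min (b j) (1+γ)) ≤ ∑ _j : Fin m, (1+γ) :=
        Finset.sum_le_sum fun j _ => min_le_right _ _
      have h2 : (∑ _j : Fin m, ((1:ℝ)+γ)) = m * (1+γ) := by
        rw [Finset.sum_const, Finset.card_univ, Fintype.card_fin, nsmul_eq_mul]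
      have h3 : (m:ℝ) * γ ≤ κ/2 := by
        rw [hγdef, mul_div_assoc']
        rw [div_le_div_iff₀ (by positivity : (0:ℝ) < 2*((m:ℝ)+1)) (by norm_num : (0:ℝ) < 2)]
        nlinarith
      nlinarith
    have hcond : ∀ z ∈ (Oioi ((m:ℝ) - (3/4)*κ) : Set ℝ), min z (m:ℝ) ∈ (V : Set ℝ) := by
      intro z hz
      simp only [Oioi, Opens.coe_mk, Set.mem_Ioi] at hz
      rcases le_total z (m:ℝ) with h | h
      · rw [min_eq_left h]
        exact hballκ ⟨by linarith, by linarith⟩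
      · rw [min_eq_right h]; exact hmV
    refine hstep.trans (le_trans ?_ (wle _ hcond))
    show _ ≤ plusMap (sumMap (fun n => ⇑(f n)) m) (⇑(f m)) _
    refine le_trans (inf_le_inf hsl le_rfl) (plusLe _ _ ?_)
    intro x hx y hy
    simp only [Oioo, Oioi, Opens.coe_mk, Set.mem_Ioo, Set.mem_Ioi] at hx hy ⊢
    obtain ⟨h1, h2⟩ := hx
    linarith

end main

section main2
variable {L : Type*} [Order.Frame L] (f : ℕ → FrameHom (Opens ℝ) L)

lemma part2 (hpos : ∀ n, f n (Oiio 0) = ⊥) (hIoi1 : ∀ n, f n (Oioi 1) = ⊥)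
    (hkey : ∀ j k : ℕ, j < k → ∀ r : ℝ, r < 1 → f k (Oioi 0) ≤ f j (Oioi r))
    (m : ℕ) (V : Opens ℝ) :
    wedgeMap (sumMap (fun n => ⇑(f n)) (m + 1)) (m : ℝ) V
      ≤ sumMap (fun n => ⇑(f n)) m V := by
  have hm0 : (0:ℝ) ≤ (m:ℝ) := Nat.cast_nonneg m
  rw [wedgeMap]
  refine iSup_le fun U => iSup_le fun hcond => ?_
  have hmin : ∀ x ∈ (U : Set ℝ), min x (m:ℝ) ∈ (V : Set ℝ) := fun x hx =>
    hcond ⟨x, hx, rfl⟩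
  have hup := sumUpper f (m+1) U ⊤ (sumMap (fun n => ⇑(f n)) m V) ?_
  · simpa using hup
  intro η hη a b hab hsub
  rw [inf_top_eq, iInf_castSucc]
  set a' : Fin m → ℝ := fun j => a j.castSucc with ha'
  set b' : Fin m → ℝ := fun j => b j.castSucc with hb'
  set ab : ℝ := a (Fin.last m) with hab'
  set bb : ℝ := b (Fin.last m) with hbb'
  have heq : (⨅ j : Fin m, f ((j.castSucc : Fin (m+1)) : ℕ)
      (Oioo (a j.castSucc) (b j.castSucc))) = ⨅ j : Fin m, f j (Oioo (a' j) (b' j)) := by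
    apply iInf_congr; intro j; simp [ha', hb']
  have heq2 : f ((Fin.last m : Fin (m+1)) : ℕ) (Oioo (a (Fin.last m)) (b (Fin.last m)))
      = f m (Oioo ab bb) := by rw [Fin.val_last]
  rw [heq, heq2]
  set T' := ⨅ j : Fin m, f j (Oioo (a' j) (b' j)) with hT'
  by_cases ha1 : ∀ j : Fin m, a' j < 1
  case neg =>
    push_neg at ha1; obtain ⟨j0, hj0⟩ := ha1
    refine le_trans (inf_le_left.trans (iInf_le _ j0)) ?_
    rw [fbothigh (f j0) (hIoi1 j0) hj0]
    exact bot_le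
  have hSa : (∑ j, a' j) ≤ (m:ℝ) := by
    calc (∑ j, a' j) ≤ ∑ _j : Fin m, (1:ℝ) :=
          Finset.sum_le_sum fun j _ => (ha1 j).le
      _ = m := by simp
  have habL : ab < bb := hab (Fin.last m)
  have habj : ∀ j : Fin m, a' j < b' j := fun j => hab j.castSucc
  have hSab : (∑ j, a' j) ≤ ∑ j, b' j := Finset.sum_le_sum fun j _ => (habj j).le
  have hsumA : (∑ i : Fin (m+1), a i) = (∑ j, a' j) + ab := by
    rw [Fin.sum_univ_castSucc (f := a)]
  have hsumB : (∑ i : Fin (m+1), b i) = (∑ j, b' j) + bb := by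
    rw [Fin.sum_univ_castSucc (f := b)]
  have hmin' : ∀ z ∈ Set.Ioo ((∑ j, a' j) + ab - η) ((∑ j, b' j) + bb + η),
      min z (m:ℝ) ∈ (V : Set ℝ) := by
    intro z hz
    refine hmin z (hsub ?_)
    rw [hsumA, hsumB]
    exact hz
  -- split the last interval
  set A₁ : ℝ := max ab (-(η/4)) with hA₁
  set B₁ : ℝ := min bb (η/4) with hB₁
  set A₂ : ℝ := max ab 0 with hA₂
  have hsplit : f m (Oioo ab bb) ≤ f m (Oioo A₁ B₁) ⊔ f m (Oioo A₂ bb) := by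
    have hc := fcover (f m) (U := Oioo ab bb)
      (A := Oioo A₁ B₁ ⊔ Oioo A₂ bb) (B := Oiio 0) ?_
    · rwa [hpos m, sup_bot_eq, map_sup] at hc
    · intro x hx
      simp only [Oioo, Oiio, Opens.coe_mk, Set.mem_Ioo, Set.mem_Iio, Opens.coe_sup,
        Set.mem_union, hA₁, hB₁, hA₂, lt_min_iff, max_lt_iff, sup_lt_iff, lt_inf_iff,
        lt_sup_iff] at hx ⊢
      obtain ⟨hx1, hx2⟩ := hx
      rcases lt_or_ge x 0 with h | h
      · rcases le_or_gt x (-(η/4)) with h2 | h2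
        · exact Or.inr h
        · refine Or.inl (Or.inl ⟨⟨hx1, h2⟩, hx2, by linarith⟩)
      · rcases lt_or_ge 0 x with h2 | h2
        · exact Or.inl (Or.inr ⟨⟨hx1, h2⟩, hx2⟩)
        · exact Or.inl (Or.inl ⟨⟨hx1, by linarith⟩, hx2, by linarith⟩)
  refine le_trans (inf_le_inf_left T' hsplit) ?_
  rw [inf_sup_left]
  refine sup_le ?_ ?_
  · -- case near zero
    by_cases hne : A₁ < B₁
    case neg =>
      rw [Oioo_bot hne, map_bot, inf_bot_eq]; exact bot_le
    by_cases hB1 : 0 < B₁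
    case neg =>
      rw [fbotlow (f m) (hpos m) (not_lt.1 hB1), inf_bot_eq]; exact bot_le
    have habA : ab ≤ A₁ := le_max_left _ _
    have hA4 : A₁ < η/4 := lt_of_lt_of_le hne (min_le_right _ _)
    have hBbb : B₁ ≤ bb := min_le_left _ _
    by_cases hmV : (m:ℝ) ∈ (V : Set ℝ)
    · obtain ⟨κ, hκ, hballκ⟩ := Metric.isOpen_iff.1 V.2 _ hmV
      rw [Real.ball_eq_Ioo] at hballκ
      set γ : ℝ := κ/(2*((m:ℝ)+1)) with hγdef
      have hγ : 0 < γ := by positivity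
      have hmγ : (m:ℝ) * γ ≤ κ/2 := by
        rw [hγdef, mul_div_assoc']
        rw [div_le_div_iff₀ (by positivity : (0:ℝ) < 2*((m:ℝ)+1)) (by norm_num : (0:ℝ) < 2)]
        nlinarith
      set η'' : ℝ := min (η/2) (κ/2) with hη''
      have hη''pos : 0 < η'' := lt_min (by positivity) (by positivity)
      refine le_trans inf_le_left ?_
      refine le_trans (le_iInf fun j => (iInf_le _ j).trans
        (fcuthigh (f j) (hIoi1 j) _ _ γ hγ)) ?_
      refine sumLower f m V η'' a' (fun j => min (b' j) (1+γ)) hη''pos ?_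
      intro z hz
      obtain ⟨hz1, hz2⟩ := hz
      have hSbcut : (∑ j, min (b' j) (1+γ)) ≤ ∑ j, b' j :=
        Finset.sum_le_sum fun j _ => min_le_left _ _
      have hSbcut2 : (∑ j, min (b' j) (1+γ)) ≤ (m:ℝ) * (1+γ) := by
        have h1 : (∑ j : Fin m, min (b' j) (1+γ)) ≤ ∑ _j : Fin m, ((1:ℝ)+γ) :=
          Finset.sum_le_sum fun j _ => min_le_right _ _
        have h2 : (∑ _j : Fin m, ((1:ℝ)+γ)) = m * (1+γ) := by
          rw [Finset.sum_const, Finset.card_univ, Fintype.card_fin, nsmul_eq_mul]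
        linarith
      have hη''1 : η'' ≤ η/2 := min_le_left _ _
      have hη''2 : η'' ≤ κ/2 := min_le_right _ _
      have hzR : min z (m:ℝ) ∈ (V : Set ℝ) := by
        refine hmin' z ⟨by linarith, by linarith⟩
      rcases le_total z (m:ℝ) with h | h
      · rwa [min_eq_left h] at hzR
      · refine hballκ ⟨by linarith, by nlinarith⟩
    · refine le_trans inf_le_left ?_
      refine sumLower f m V (η/2) a' b' (by positivity) ?_
      intro z hz
      obtain ⟨hz1, hz2⟩ := hz
      have hzR : min z (m:ℝ) ∈ (V : Set ℝ) := by
        refine hmin' z ⟨by linarith, by linarith⟩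
      rcases lt_or_ge z (m:ℝ) with h | h
      · rwa [min_eq_left h.le] at hzR
      · exfalso; apply hmV; rwa [min_eq_right h] at hzR
  · -- case away from zero
    by_cases hne : A₂ < bb
    case neg =>
      rw [Oioo_bot hne, map_bot, inf_bot_eq]; exact bot_le
    have hfm0 : f m (Oioo A₂ bb) ≤ f m (Oioi 0) := by
      apply fmono
      intro x hx
      simp only [Oioo, Oioi, Opens.coe_mk, Set.mem_Ioo, Set.mem_Ioi] at hx ⊢
      have : (0:ℝ) ≤ A₂ := le_max_right _ _
      linarith [hx.1]
    set r1 : ℝ := 1 - η/(2*((m:ℝ)+1)) with hr1def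
    have hr1 : r1 < 1 := by
      have : (0:ℝ) < η/(2*((m:ℝ)+1)) := by positivity
      rw [hr1def]; linarith
    by_cases hball : ∀ j : Fin m, max (a' j) r1 < b' j
    case neg =>
      push_neg at hball; obtain ⟨j0, hj0⟩ := hball
      have hb : T' ⊓ f m (Oioo A₂ bb) ≤ f j0 (Oioo (a' j0) (b' j0)) ⊓ f j0 (Oioi r1) :=
        le_inf (inf_le_left.trans (iInf_le _ j0))
          (inf_le_right.trans (hfm0.trans (hkey j0 m j0.2 r1 hr1)))
      rw [fmeetIoi, Oioo_bot (not_lt.2 hj0), map_bot] at hb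
      exact hb.trans bot_le
    have hmr1 : (m:ℝ) * r1 ≤ ∑ j, b' j := by
      have h1 : (m:ℝ) * r1 = ∑ _j : Fin m, r1 := by
        rw [Finset.sum_const, Finset.card_univ, Fintype.card_fin, nsmul_eq_mul]
      rw [h1]
      exact Finset.sum_le_sum fun j _ => ((le_max_right _ _).trans (hball j).le)
    have hmr1' : (m:ℝ) - η/2 ≤ (m:ℝ) * r1 := by
      have hd : (m:ℝ) * (η/(2*((m:ℝ)+1))) ≤ η/2 := by
        rw [mul_div_assoc']
        rw [div_le_div_iff₀ (by positivity : (0:ℝ) < 2*((m:ℝ)+1)) (by norm_num : (0:ℝ) < 2)]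
        nlinarith
      have : (m:ℝ) * r1 = m - m * (η/(2*((m:ℝ)+1))) := by rw [hr1def]; ring
      linarith
    have hA₂0 : (0:ℝ) ≤ A₂ := le_max_right _ _
    have habA2 : ab ≤ A₂ := le_max_left _ _
    have hmV : (m:ℝ) ∈ (V : Set ℝ) := by
      set lo : ℝ := (∑ j, a' j) + ab - η with hlo
      set hi : ℝ := (∑ j, b' j) + bb + η with hhi
      have hlohi : lo < hi := by
        rw [hlo, hhi]
        have := hSab
        linarith
      have hmhi : (m:ℝ) < hi := by
        rw [hhi]
        have h2 : (0:ℝ) < bb := lt_of_le_of_lt hA₂0 hne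
        have hv : (m:ℝ) - η/2 ≤ ∑ j, b' j := le_trans hmr1' hmr1
        linarith [hv, h2, hη]
      set z₀ : ℝ := (max lo (m:ℝ) + hi)/2 with hz₀
      have hmax : max lo (m:ℝ) < hi := max_lt hlohi hmhi
      have hz₀mem : z₀ ∈ Set.Ioo lo hi := by
        constructor
        · have := le_max_left lo (m:ℝ); rw [hz₀]; linarith
        · rw [hz₀]; linarith
      have hz₀m : (m:ℝ) ≤ z₀ := by
        have := le_max_right lo (m:ℝ); rw [hz₀]; linarith
      have := hmin' z₀ hz₀mem
      rwa [min_eq_right hz₀m] at this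
    obtain ⟨κ, hκ, hballκ⟩ := Metric.isOpen_iff.1 V.2 _ hmV
    rw [Real.ball_eq_Ioo] at hballκ
    set γ : ℝ := κ/(2*((m:ℝ)+1)) with hγdef
    have hγ : 0 < γ := by positivity
    have hmγ : (m:ℝ) * γ ≤ κ/2 := by
      rw [hγdef, mul_div_assoc']
      rw [div_le_div_iff₀ (by positivity : (0:ℝ) < 2*((m:ℝ)+1)) (by norm_num : (0:ℝ) < 2)]
      nlinarith
    set r2 : ℝ := 1 - γ with hr2def
    have hr2 : r2 < 1 := by rw [hr2def]; linarith
    have hstep : T' ⊓ f m (Oioo A₂ bb) ≤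
        ⨅ j : Fin m, f j (Oioo (max (a' j) r2) (min (b' j) (1+γ))) := by
      refine le_iInf fun j => ?_
      have h1 : T' ⊓ f m (Oioo A₂ bb) ≤ f j (Oioo (a' j) (b' j)) ⊓ f j (Oioi r2) :=
        le_inf (inf_le_left.trans (iInf_le _ j))
          (inf_le_right.trans (hfm0.trans (hkey j m j.2 r2 hr2)))
      rw [fmeetIoi] at h1
      exact h1.trans (fcuthigh (f j) (hIoi1 j) _ _ γ hγ)
    refine hstep.trans ?_
    refine sumLower f m V (κ/4) (fun j => max (a' j) r2) (fun j => min (b' j) (1+γ))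
      (by positivity) ?_
    intro z hz
    obtain ⟨hz1, hz2⟩ := hz
    have hlow : (m:ℝ) * r2 ≤ ∑ j : Fin m, max (a' j) r2 := by
      have h2 : (m:ℝ) * r2 = ∑ _j : Fin m, r2 := by
        rw [Finset.sum_const, Finset.card_univ, Fintype.card_fin, nsmul_eq_mul]
      rw [h2]
      exact Finset.sum_le_sum fun j _ => le_max_right _ _
    have hhigh : (∑ j : Fin m, min (b' j) (1+γ)) ≤ (m:ℝ) * (1+γ) := by
      have h1 : (∑ j : Fin m, min (b' j) (1+γ)) ≤ ∑ _j : Fin m, ((1:ℝ)+γ) :=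
        Finset.sum_le_sum fun j _ => min_le_right _ _
      have h2 : (∑ _j : Fin m, ((1:ℝ)+γ)) = m * (1+γ) := by
        rw [Finset.sum_const, Finset.card_univ, Fintype.card_fin, nsmul_eq_mul]
      linarith
    have hr2m : (m:ℝ) * r2 = m - m * γ := by rw [hr2def]; ring
    have hmexp : (m:ℝ) * (1+γ) = m + m * γ := by ring
    refine hballκ ⟨?_, ?_⟩
    · linarith
    · linarith

end main2

/-- If `(fₙ)` is a good sequence in `R₀L` (each `fₙ` is a fixed point of the
truncation, `fₙ = (fₙ + f_{n+1})‾`, and `fₙ` decreases pointwise to `0`), then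
the partial sums `g_m := f₁ + ⋯ + f_m` satisfy `g_m = g_{m+1} ∧ m` for all `m`;
i.e., the partial sums of a good sequence form a truncation sequence (so the
composite good sequences → truncation sequences → good sequences is the
identity). Here `f n` denotes `f_{n+1}`. -/

theorem stmt18 (L : Type*) [Order.Frame L]
    (f : ℕ → FrameHom (Opens ℝ) L)
    (hpos : ∀ n, f n (Oiio 0) = ⊥)
    (htrunc : ∀ n, ∀ U : Opens ℝ, f n U = truncMap (⇑(f n)) U)
    (hgood : ∀ n, ∀ U : Opens ℝ,
      f n U = truncMap (plusMap (⇑(f n)) (⇑(f (n + 1)))) U)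
    (hdec : ∀ n (r : ℝ), f (n + 1) (Oioi r) ≤ f n (Oioi r))
    (hto0 : ∀ ε : ℝ, 0 < ε → ⨆ n, f n (Oiio ε) = ⊤) :
    ∀ m : ℕ, ∀ V : Opens ℝ,
      sumMap (fun n => ⇑(f n)) m V
        = wedgeMap (sumMap (fun n => ⇑(f n)) (m + 1)) (m : ℝ) V := by
  have hIoi1 : ∀ n, f n (Oioi 1) = ⊥ := fun n =>
    fIoi1bot (fun k => f (n + k)) (htrunc n)
  have hkey := keyAll f hgood hdec
  intro m V
  exact le_antisymm (part1 f hpos hIoi1 hkey m V) (part2 f hpos hIoi1 hkey m V)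
end
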